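/- arXiv:1203.5595 — 3 statements merged into one kernel-verified Lean document; each statement's English description precedes it below -/
import Mathlib

section
/- For formal power series f₁, f₂ in K[[x₁,...,x_k]] over a field K (with f₁f₂ ≠ 0), the Newton polyhedron of the product equals the sum of the Newton polyhedra: N(f₁·f₂) = N(f₁) + N(f₂). -/
open Pointwise

/-- The positive quadrant `ℝ≥0^k`. -/
def Qk (k : ℕ) : Set (Fin k → ℝ) := {x | ∀ i, 0 ≤ x i}

/-- The Newton polyhedron of a multivariate power series: the convex hull of
`⋃_{A ∈ Supp f} (A + ℝ≥0^k)`. -/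
noncomputable def newtonPolyhedron {k : ℕ} {K : Type*} [Field K]
    (f : MvPowerSeries (Fin k) K) : Set (Fin k → ℝ) :=
  convexHull ℝ
    (⋃ A ∈ {A : Fin k →₀ ℕ | MvPowerSeries.coeff A f ≠ 0},
      {fun i => (A i : ℝ)} + Qk k)

namespace NPaux

variable {k : ℕ}

/-- The canonical map from exponent vectors to `ℝ^k`. -/
def toR (A : Fin k →₀ ℕ) : Fin k → ℝ := fun i => (A i : ℝ)

lemma toR_add (A B : Fin k →₀ ℕ) : toR (A + B) = toR A + toR B := by
  funext i; simp [toR]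

lemma convex_Qk : Convex ℝ (Qk k) := by
  intro x hx y hy a b ha hb _ i
  have := hx i; have := hy i
  simp only [Pi.add_apply, Pi.smul_apply, smul_eq_mul]
  positivity

lemma zero_mem_Qk : (0 : Fin k → ℝ) ∈ Qk k := fun _ => le_refl 0

lemma add_mem_Qk {q q' : Fin k → ℝ} (hq : q ∈ Qk k) (hq' : q' ∈ Qk k) : q + q' ∈ Qk k :=
  fun i => add_nonneg (hq i) (hq' i)

lemma smul_mem_Qk {t : ℝ} (ht : 0 ≤ t) {q : Fin k → ℝ} (hq : q ∈ Qk k) : t • q ∈ Qk k :=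
  fun i => mul_nonneg ht (hq i)

lemma isClosed_Qk : IsClosed (Qk k) := by
  have : Qk k = ⋂ i, {x : Fin k → ℝ | 0 ≤ x i} := by
    ext x; simp [Qk, Set.mem_iInter]
  rw [this]
  exact isClosed_iInter fun i => isClosed_le continuous_const (continuous_apply i)

lemma sub_toR_mem_Qk {A B : Fin k →₀ ℕ} (h : A ≤ B) : toR B - toR A ∈ Qk k := by
  intro i
  simp only [Pi.sub_apply, toR, sub_nonneg]
  exact_mod_cast (Finsupp.le_def.mp h i)

/-- Dickson's lemma: every set of exponent vectors has a finite dominating subset. -/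
theorem dickson (S : Set (Fin k →₀ ℕ)) :
    ∃ W : Set (Fin k →₀ ℕ), W.Finite ∧ W ⊆ S ∧ ∀ A ∈ S, ∃ w ∈ W, w ≤ A := by

  set W := {a ∈ S | ∀ b ∈ S, b ≤ a → b = a} with hW
  have hWS : W ⊆ S := fun a ha => ha.1
  refine ⟨W, ?_, hWS, ?_⟩
  · refine IsAntichain.finite_of_partiallyWellOrderedOn (r := (· ≤ ·)) ?_
      ((Set.isPWO_of_wellQuasiOrderedLE S).mono hWS)
    intro a ha b hb hab hle
    exact hab (hb.2 a ha.1 hle)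
  · intro A hA
    have hsub : {b ∈ S | b ≤ A} ⊆ S := fun b hb => hb.1
    have hwf : Set.IsWF {b ∈ S | b ≤ A} := ((Set.isPWO_of_wellQuasiOrderedLE S).mono hsub).isWF
    have hne : {b ∈ S | b ≤ A}.Nonempty := ⟨A, hA, le_rfl⟩
    refine ⟨hwf.min hne, ⟨(hwf.min_mem hne).1, ?_⟩, (hwf.min_mem hne).2⟩
    intro b hb hba
    by_contra hne'
    exact hwf.not_lt_min hne ⟨hb, hba.trans (hwf.min_mem hne).2⟩ (lt_of_le_of_ne hba hne')

/-- Lexicographically minimal element of a nonempty set of exponent vectors. -/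
lemma exists_lex_min (M : Set (Fin k →₀ ℕ)) (hM : M.Nonempty) :
    ∃ a ∈ M, ∀ b ∈ M, toLex a ≤ toLex b := by
  obtain ⟨a₀, ha₀⟩ := hM
  have wf : WellFounded ((· < ·) : Lex (Fin k →₀ ℕ) → Lex (Fin k →₀ ℕ) → Prop) :=
    IsWellFounded.wf
  set T : Set (Lex (Fin k →₀ ℕ)) := {x | ofLex x ∈ M}
  have hT : T.Nonempty := ⟨toLex a₀, ha₀⟩
  refine ⟨ofLex (wf.min T hT), wf.min_mem T hT, fun b hb => ?_⟩
  exact not_lt.mp (wf.not_lt_min T (show toLex b ∈ T from hb))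

lemma lex_cancel {a₁ a₂ b c : Lex (Fin k →₀ ℕ)}
    (h1 : a₁ ≤ b) (h2 : a₂ ≤ c) (h : b + c = a₁ + a₂) : b = a₁ ∧ c = a₂ := by
  constructor
  · by_contra hne
    have hlt : a₁ < b := lt_of_le_of_ne h1 (Ne.symm hne)
    exact (add_lt_add_of_lt_of_le hlt h2).ne' h
  · by_contra hne
    have hlt : a₂ < c := lt_of_le_of_ne h2 (Ne.symm hne)
    exact (add_lt_add_of_le_of_lt h1 hlt).ne' h

lemma phi_mono (φ : (Fin k → ℝ) →L[ℝ] ℝ) (hφ : ∀ q ∈ Qk k, 0 ≤ φ q)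
    {A B : Fin k →₀ ℕ} (h : A ≤ B) : φ (toR A) ≤ φ (toR B) := by
  have h0 : 0 ≤ φ (toR B - toR A) := hφ _ (sub_toR_mem_Qk h)
  have : φ (toR B - toR A) = φ (toR B) - φ (toR A) := map_sub φ _ _
  linarith

section Field

variable {K : Type*} [Field K]

/-- The support of a nonzero power series is nonempty. -/
lemma supp_nonempty {f : MvPowerSeries (Fin k) K} (hf : f ≠ 0) :
    ∃ A, MvPowerSeries.coeff A f ≠ 0 := by
  by_contra hc
  push_neg at hc
  exact hf (MvPowerSeries.ext fun A => by simp [hc A])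

/-- There is a `φ`-minimizer of the support that is lexicographically least among
all `φ`-minimizers. -/
lemma exists_min (f : MvPowerSeries (Fin k) K) (hf : f ≠ 0)
    (φ : (Fin k → ℝ) →L[ℝ] ℝ) (hφ : ∀ q ∈ Qk k, 0 ≤ φ q) :
    ∃ A, MvPowerSeries.coeff A f ≠ 0 ∧
      (∀ B, MvPowerSeries.coeff B f ≠ 0 → φ (toR A) ≤ φ (toR B)) ∧
      (∀ B, MvPowerSeries.coeff B f ≠ 0 → φ (toR B) ≤ φ (toR A) → toLex A ≤ toLex B) := by
  set S : Set (Fin k →₀ ℕ) := {A | MvPowerSeries.coeff A f ≠ 0} with hS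
  obtain ⟨W, hWfin, hWS, hWdom⟩ := dickson S
  obtain ⟨A₀, hA₀⟩ := supp_nonempty hf
  obtain ⟨w₁, hw₁, _⟩ := hWdom A₀ hA₀
  obtain ⟨w₀, hw₀, hw₀min⟩ := Set.exists_min_image W (fun A => φ (toR A)) hWfin ⟨w₁, hw₁⟩
  have hglobal : ∀ B ∈ S, φ (toR w₀) ≤ φ (toR B) := by
    intro B hB
    obtain ⟨w, hw, hwB⟩ := hWdom B hB
    exact le_trans (hw₀min w hw) (phi_mono φ hφ hwB)
  set M : Set (Fin k →₀ ℕ) := {A ∈ S | φ (toR A) ≤ φ (toR w₀)} with hM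
  obtain ⟨a, ⟨haS, hale⟩, halex⟩ := exists_lex_min M ⟨w₀, hWS hw₀, le_rfl⟩
  refine ⟨a, haS, fun B hB => le_trans hale (hglobal B hB), fun B hB hBa => ?_⟩
  exact halex B ⟨hB, le_trans hBa hale⟩

/-- Key lemma: for any nonnegative functional `φ`, there are `φ`-minimizers `A₁, A₂` of the
supports of `f₁`, `f₂` such that `A₁ + A₂` is in the support of `f₁ * f₂`. -/
lemma key (f₁ f₂ : MvPowerSeries (Fin k) K) (h1 : f₁ ≠ 0) (h2 : f₂ ≠ 0)
    (φ : (Fin k → ℝ) →L[ℝ] ℝ) (hφ : ∀ q ∈ Qk k, 0 ≤ φ q) :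
    ∃ A₁ A₂ : Fin k →₀ ℕ,
      MvPowerSeries.coeff (A₁ + A₂) (f₁ * f₂) ≠ 0 ∧
      (∀ B, MvPowerSeries.coeff B f₁ ≠ 0 → φ (toR A₁) ≤ φ (toR B)) ∧
      (∀ B, MvPowerSeries.coeff B f₂ ≠ 0 → φ (toR A₂) ≤ φ (toR B)) := by

  obtain ⟨A₁, hA₁, hmin₁, hlex₁⟩ := exists_min f₁ h1 φ hφ
  obtain ⟨A₂, hA₂, hmin₂, hlex₂⟩ := exists_min f₂ h2 φ hφ
  refine ⟨A₁, A₂, ?_, hmin₁, hmin₂⟩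
  rw [MvPowerSeries.coeff_mul]
  rw [Finset.sum_eq_single_of_mem (A₁, A₂) (Finset.HasAntidiagonal.mem_antidiagonal.mpr rfl)]
  · exact mul_ne_zero hA₁ hA₂
  · rintro ⟨B, C⟩ hmem hne
    by_contra hprod
    have hB : MvPowerSeries.coeff B f₁ ≠ 0 := left_ne_zero_of_mul hprod
    have hC : MvPowerSeries.coeff C f₂ ≠ 0 := right_ne_zero_of_mul hprod
    have hBC : B + C = A₁ + A₂ := Finset.HasAntidiagonal.mem_antidiagonal.mp hmem
    have hsum : φ (toR B) + φ (toR C) = φ (toR A₁) + φ (toR A₂) := by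
      have := congrArg (fun D => φ (toR D)) hBC
      simpa [toR_add, map_add] using this
    have h1' := hmin₁ B hB
    have h2' := hmin₂ C hC
    have hB' : φ (toR B) ≤ φ (toR A₁) := by linarith
    have hC' : φ (toR C) ≤ φ (toR A₂) := by linarith
    have hlB : toLex A₁ ≤ toLex B := hlex₁ B hB hB'
    have hlC : toLex A₂ ≤ toLex C := hlex₂ C hC hC'
    have hlsum : toLex B + toLex C = toLex A₁ + toLex A₂ := congrArg toLex hBC
    obtain ⟨hb, hc⟩ := lex_cancel hlB hlC hlsum
    exact hne (by simp [Prod.ext_iff, toLex_inj.mp hb, toLex_inj.mp hc])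

lemma union_eq (S : Set (Fin k →₀ ℕ)) :
    (⋃ A ∈ S, {fun i => ((A i : ℝ))} + Qk k) = toR '' S + Qk k := by
  ext x
  simp only [Set.mem_iUnion, Set.mem_add, Set.mem_singleton_iff, Set.mem_image]
  constructor
  · rintro ⟨A, hA, y, rfl, q, hq, rfl⟩
    exact ⟨toR A, ⟨A, hA, rfl⟩, q, hq, rfl⟩
  · rintro ⟨y, ⟨A, hA, rfl⟩, q, hq, rfl⟩
    exact ⟨A, hA, toR A, rfl, q, hq, rfl⟩

lemma np_eq (f : MvPowerSeries (Fin k) K) :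
    newtonPolyhedron f
      = convexHull ℝ (toR '' {A | MvPowerSeries.coeff A f ≠ 0}) + Qk k := by
  unfold newtonPolyhedron
  rw [union_eq, convexHull_add, convex_Qk.convexHull_eq]

lemma mem_np {f : MvPowerSeries (Fin k) K} {A : Fin k →₀ ℕ}
    (hA : MvPowerSeries.coeff A f ≠ 0) {q : Fin k → ℝ} (hq : q ∈ Qk k) :
    toR A + q ∈ newtonPolyhedron f := by
  apply subset_convexHull
  refine Set.mem_biUnion hA ?_
  exact Set.add_mem_add rfl hq

lemma np_subset {f : MvPowerSeries (Fin k) K} {C : Set (Fin k → ℝ)} (hC : Convex ℝ C)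
    (h : ∀ A, MvPowerSeries.coeff A f ≠ 0 → ∀ q ∈ Qk k, toR A + q ∈ C) :
    newtonPolyhedron f ⊆ C := by
  refine convexHull_min ?_ hC
  intro x hx
  simp only [Set.mem_iUnion, Set.mem_add, Set.mem_singleton_iff, Set.mem_setOf_eq] at hx
  obtain ⟨A, hA, y, rfl, q, hq, rfl⟩ := hx
  exact h A hA q hq

/-- On the Newton polyhedron, a nonnegative functional is at least its minimum on the support. -/
lemma np_le {f : MvPowerSeries (Fin k) K} (φ : (Fin k → ℝ) →L[ℝ] ℝ)
    (hφ : ∀ q ∈ Qk k, 0 ≤ φ q) {A₁ : Fin k →₀ ℕ}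
    (hmin : ∀ B, MvPowerSeries.coeff B f ≠ 0 → φ (toR A₁) ≤ φ (toR B)) :
    ∀ b ∈ newtonPolyhedron f, φ (toR A₁) ≤ φ b := by
  have hCconv : Convex ℝ {y : Fin k → ℝ | φ (toR A₁) ≤ φ y} := by
    intro y hy z hz a b ha hb hab
    simp only [Set.mem_setOf_eq] at hy hz ⊢
    have hmap : φ (a • y + b • z) = a * φ y + b * φ z := by
      rw [map_add, map_smul, map_smul]; rfl
    have h1 : a * φ (toR A₁) ≤ a * φ y := mul_le_mul_of_nonneg_left hy ha
    have h2 : b * φ (toR A₁) ≤ b * φ z := mul_le_mul_of_nonneg_left hz hb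
    have : (a + b) * φ (toR A₁) = φ (toR A₁) := by rw [hab, one_mul]
    nlinarith
  intro b hb
  refine np_subset hCconv ?_ hb
  intro A hA q hq
  have := hmin A hA
  have h0 := hφ q hq
  simp only [Set.mem_setOf_eq, map_add]
  linarith

end Field

end NPaux

/-- For power series `f₁, f₂` over a field with `f₁ f₂ ≠ 0`, the Newton polyhedron of the
product is the sum of the Newton polyhedra (convex hull of the Minkowski sum). -/
theorem newtonPolyhedron_mul {k : ℕ} {K : Type*} [Field K]
    (f₁ f₂ : MvPowerSeries (Fin k) K) (h : f₁ * f₂ ≠ 0) :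
    newtonPolyhedron (f₁ * f₂) =
      convexHull ℝ (newtonPolyhedron f₁ + newtonPolyhedron f₂) := by
  classical
  have h1 : f₁ ≠ 0 := left_ne_zero_of_mul h
  have h2 : f₂ ≠ 0 := right_ne_zero_of_mul h
  apply Set.Subset.antisymm
  · -- easy direction
    refine NPaux.np_subset (convex_convexHull ℝ _) ?_
    intro A hA q hq
    rw [MvPowerSeries.coeff_mul] at hA
    obtain ⟨⟨B, C⟩, hmem, hBC⟩ := Finset.exists_ne_zero_of_sum_ne_zero hA
    have hB : MvPowerSeries.coeff B f₁ ≠ 0 := left_ne_zero_of_mul hBC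
    have hC : MvPowerSeries.coeff C f₂ ≠ 0 := right_ne_zero_of_mul hBC
    have hBCA : B + C = A := Finset.HasAntidiagonal.mem_antidiagonal.mp hmem
    have hmem1 : NPaux.toR B + q ∈ newtonPolyhedron f₁ := NPaux.mem_np hB hq
    have hmem2 : NPaux.toR C + 0 ∈ newtonPolyhedron f₂ := NPaux.mem_np hC NPaux.zero_mem_Qk
    have hsum : (NPaux.toR B + q) + (NPaux.toR C + 0)
        ∈ newtonPolyhedron f₁ + newtonPolyhedron f₂ := Set.add_mem_add hmem1 hmem2
    have hx : NPaux.toR A + q = (NPaux.toR B + q) + (NPaux.toR C + 0) := by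
      rw [← hBCA, NPaux.toR_add]; ring
    rw [hx]
    exact subset_convexHull ℝ _ hsum
  · -- hard direction
    refine convexHull_min ?_ (convex_convexHull ℝ _)
    rintro x ⟨b, hb, c, hc, rfl⟩
    obtain ⟨W, hWfin, hWS, hWdom⟩ :=
      NPaux.dickson {A : Fin k →₀ ℕ | MvPowerSeries.coeff A (f₁ * f₂) ≠ 0}
    set P := convexHull ℝ (NPaux.toR '' W) + Qk k with hP
    have hPsub : P ⊆ newtonPolyhedron (f₁ * f₂) := by
      rw [NPaux.np_eq]
      exact Set.add_subset_add (convexHull_mono (Set.image_mono hWS)) Set.Subset.rfl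
    refine hPsub ?_
    by_contra hxP
    have hPconv : Convex ℝ P := (convex_convexHull ℝ _).add NPaux.convex_Qk
    have hPclosed : IsClosed P :=
      NPaux.isClosed_Qk.add_left_of_isCompact ((hWfin.image NPaux.toR).isCompact_convexHull ℝ)
    obtain ⟨φ, u, hxu, hu⟩ := geometric_hahn_banach_point_closed hPconv hPclosed hxP
    obtain ⟨A₀, hA₀⟩ := NPaux.supp_nonempty h
    obtain ⟨w₀, hw₀, -⟩ := hWdom A₀ hA₀
    have hy₀ : NPaux.toR w₀ ∈ P := by
      have := Set.add_mem_add
        (subset_convexHull ℝ _ (Set.mem_image_of_mem NPaux.toR hw₀)) (NPaux.zero_mem_Qk (k := k))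
      simpa using this
    have hPQ : ∀ y ∈ P, ∀ q ∈ Qk k, y + q ∈ P := by
      rintro y ⟨z, hz, q', hq', rfl⟩ q hq
      exact ⟨z, hz, q' + q, NPaux.add_mem_Qk hq' hq, (add_assoc z q' q).symm⟩
    have hφ : ∀ q ∈ Qk k, 0 ≤ φ q := by
      intro q hq
      by_contra hneg
      push_neg at hneg
      set t := (φ (NPaux.toR w₀) - u) / (-φ q) with ht_def
      have hu₀ : u < φ (NPaux.toR w₀) := hu _ hy₀
      have hne' : (0:ℝ) < -φ q := by linarith
      have ht : 0 ≤ t := div_nonneg (by linarith) (by linarith)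
      have hmem : NPaux.toR w₀ + t • q ∈ P := hPQ _ hy₀ _ (NPaux.smul_mem_Qk ht hq)
      have h3 := hu _ hmem
      rw [map_add, map_smul, smul_eq_mul] at h3
      have h4 : t * φ q = u - φ (NPaux.toR w₀) := by
        rw [ht_def, div_mul_eq_mul_div, div_eq_iff (ne_of_gt hne')]
        ring
      linarith
    obtain ⟨A₁, A₂, hD, hmin₁, hmin₂⟩ := NPaux.key f₁ f₂ h1 h2 φ hφ
    obtain ⟨w, hw, hwD⟩ := hWdom (A₁ + A₂) hD
    have hDP : NPaux.toR (A₁ + A₂) ∈ P := by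
      have := Set.add_mem_add
        (subset_convexHull ℝ _ (Set.mem_image_of_mem NPaux.toR hw)) (NPaux.sub_toR_mem_Qk hwD)
      simpa using this
    have hDgt : u < φ (NPaux.toR (A₁ + A₂)) := hu _ hDP
    have hbmin : φ (NPaux.toR A₁) ≤ φ b := NPaux.np_le φ hφ hmin₁ b hb
    have hcmin : φ (NPaux.toR A₂) ≤ φ c := NPaux.np_le φ hφ hmin₂ c hc
    have hbc : φ (b + c) = φ b + φ c := map_add φ b c
    have hD2 : φ (NPaux.toR (A₁ + A₂)) = φ (NPaux.toR A₁) + φ (NPaux.toR A₂) := by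
      rw [NPaux.toR_add, map_add]
    linarith
end

section
/- The product operation on Newton polygons, defined on elementary polygons by {ℓ/h} * {ℓ'/h'} = {ℓℓ' / min(ℓh', ℓ'h)} and extended bilinearly over decompositions into elementary polygons, is well-defined (independent of the chosen decompositions), commutative, associative, and distributive over the sum of polygons. -/
open Pointwise MeasureTheory

/-- The positive quadrant in `ℝ²`. -/
def Q2 : Set (ℝ × ℝ) := {p | 0 ≤ p.1 ∧ 0 ≤ p.2}

/-- The elementary Newton polygon `{ℓ/h}`. -/
noncomputable def elemPoly (l h : ℝ) : Set (ℝ × ℝ) :=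
  convexHull ℝ (({((0 : ℝ), h)} + Q2) ∪ ({(l, (0 : ℝ))} + Q2))

/-- The sum (convex hull of the Minkowski sum) of the elementary polygons listed in `L`. -/
noncomputable def sumList (L : List (ℝ × ℝ)) : Set (ℝ × ℝ) :=
  convexHull ℝ (Q2 + (L.map (fun p => elemPoly p.1 p.2)).sum)

/-- The sum of two Newton polygons: convex hull of the Minkowski sum. -/
noncomputable def polySum (N₁ N₂ : Set (ℝ × ℝ)) : Set (ℝ × ℝ) :=
  convexHull ℝ (N₁ + N₂)

/-- The product of decompositions: on elementary polygons,
`{ℓ/h} * {ℓ'/h'} = {ℓℓ' / min(ℓh', ℓ'h)}`, extended bilinearly. -/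
def prodList (L₁ L₂ : List (ℝ × ℝ)) : List (ℝ × ℝ) :=
  L₁.flatMap fun p => L₂.map fun q => (p.1 * q.1, min (p.1 * q.2) (q.1 * p.2))

/-- All lengths and heights in the list are positive. -/
def PosList (L : List (ℝ × ℝ)) : Prop := ∀ p ∈ L, 0 < p.1 ∧ 0 < p.2





/-- Explicit halfplane description of the elementary polygon. -/
def Epoly (l h : ℝ) : Set (ℝ × ℝ) := {p | 0 ≤ p.1 ∧ 0 ≤ p.2 ∧ h * l ≤ h * p.1 + l * p.2}

lemma convex_Epoly (l h : ℝ) : Convex ℝ (Epoly l h) := by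
  have : Epoly l h = {p : ℝ×ℝ | 0 ≤ p.1} ∩ ({p : ℝ×ℝ | 0 ≤ p.2} ∩ {p : ℝ×ℝ | h*l ≤ h*p.1 + l*p.2}) := by
    ext p; simp [Epoly, and_assoc]
  rw [this]
  refine (convex_halfSpace_ge ⟨fun a b => rfl, fun c a => rfl⟩ 0).inter
    ((convex_halfSpace_ge ⟨fun a b => rfl, fun c a => rfl⟩ 0).inter
      (convex_halfSpace_ge ⟨fun a b => by simp [Prod.fst_add, Prod.snd_add]; ring,
        fun c a => by simp [Prod.smul_def, smul_eq_mul]; ring⟩ (h*l)))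

lemma elemPoly_eq (l h : ℝ) (hl : 0 < l) (hh : 0 < h) : elemPoly l h = Epoly l h := by
  apply le_antisymm
  · apply convexHull_min _ (convex_Epoly l h)
    rintro p (⟨a, ha, q, hq, rfl⟩ | ⟨a, ha, q, hq, rfl⟩) <;>
      simp only [Set.mem_singleton_iff] at ha <;> subst ha <;>
      obtain ⟨hq1, hq2⟩ := hq <;>
      refine ⟨by simp [Prod.fst_add]; nlinarith, by simp [Prod.snd_add]; nlinarith,
        by simp [Prod.fst_add, Prod.snd_add]; nlinarith⟩
  · rintro ⟨x, y⟩ ⟨hx, hy, hxy⟩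
    simp only at hx hy hxy
    by_cases hxl : l ≤ x
    · apply subset_convexHull
      right
      exact ⟨(l, 0), rfl, (x - l, y), ⟨by simpa using hxl, hy⟩, by simp⟩
    · push_neg at hxl
      set lam : ℝ := (l - x) / l with hlam
      have hlam0 : 0 < lam := div_pos (by linarith) hl
      have hlam1 : lam ≤ 1 := by rw [div_le_one hl]; linarith
      have hyl : lam * h ≤ y := by
        rw [hlam, div_mul_eq_mul_div, div_le_iff₀ hl]
        nlinarith
      have hA : ((0:ℝ), h) + ((0:ℝ), y - lam * h) ∈ (({((0 : ℝ), h)} + Q2) ∪ ({(l, (0 : ℝ))} + Q2)) := by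
        left; exact ⟨(0, h), rfl, (0, y - lam*h), ⟨le_refl 0, by simpa using (by linarith : (0:ℝ) ≤ y - lam*h)⟩, rfl⟩
      have hB : ((l:ℝ), 0) + ((0:ℝ), y - lam * h) ∈ (({((0 : ℝ), h)} + Q2) ∪ ({(l, (0 : ℝ))} + Q2)) := by
        right; exact ⟨(l, 0), rfl, (0, y - lam*h), ⟨le_refl 0, by simpa using (by linarith : (0:ℝ) ≤ y - lam*h)⟩, rfl⟩
      have key := (convex_convexHull ℝ (({((0 : ℝ), h)} + Q2) ∪ ({(l, (0 : ℝ))} + Q2)))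
        (subset_convexHull ℝ _ hA) (subset_convexHull ℝ _ hB) (a := lam) (b := 1 - lam)
        hlam0.le (by linarith) (by ring)
      have hpt : lam • (((0:ℝ), h) + ((0:ℝ), y - lam * h)) + (1 - lam) • (((l:ℝ), 0) + ((0:ℝ), y - lam * h))
          = ((x:ℝ), y) := by
        have hl' : l ≠ 0 := ne_of_gt hl
        simp only [Prod.mk_add_mk, Prod.smul_mk, smul_eq_mul, Prod.mk.injEq]
        constructor
        · rw [hlam]; field_simp; ring
        · ring
      rwa [hpt] at key

lemma Epoly_add_Epoly {l h l' h' : ℝ} (hl : 0 < l) (hh : 0 < h) (hl' : 0 < l') (hh' : 0 < h')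
    (hcol : h * l' = h' * l) :
    Epoly l h + Epoly l' h' = Epoly (l + l') (h + h') := by
  ext p
  constructor
  · rintro ⟨a, ⟨ha1, ha2, ha3⟩, b, ⟨hb1, hb2, hb3⟩, rfl⟩
    refine ⟨by simp [Prod.fst_add]; linarith, by simp [Prod.snd_add]; linarith, ?_⟩
    simp only [Prod.fst_add, Prod.snd_add]
    have e1 : (l + l') * h ≤ (h + h') * a.1 + (l + l') * a.2 := by nlinarith
    have e2 : (l + l') * h' ≤ (h + h') * b.1 + (l + l') * b.2 := by nlinarith
    nlinarith
  · rintro ⟨hp1, hp2, hp3⟩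
    have hll' : 0 < l + l' := by linarith
    have E : (l+l') * (h*p.1 + l*p.2) = l * ((h+h')*p.1 + (l+l')*p.2) := by
      linear_combination p.1 * hcol
    have E' : (l+l') * (h'*p.1 + l'*p.2) = l' * ((h+h')*p.1 + (l+l')*p.2) := by
      linear_combination (-p.1) * hcol
    refine ⟨(l / (l+l')) • p, ⟨?_, ?_, ?_⟩, (l' / (l+l')) • p, ⟨?_, ?_, ?_⟩, ?_⟩
    · exact mul_nonneg (div_nonneg hl.le hll'.le) hp1
    · exact mul_nonneg (div_nonneg hl.le hll'.le) hp2
    · show h * l ≤ h * (l / (l+l') * p.1) + l * (l / (l+l') * p.2)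
      rw [show h * (l / (l+l') * p.1) + l * (l / (l+l') * p.2) = (l * (h * p.1 + l * p.2))/(l+l') by ring,
        le_div_iff₀ hll']
      have h1 : (l + l') * (h * (l + l')) ≤ (l + l') * (h * p.1 + l * p.2) := by
        rw [E, show (l+l') * (h*(l+l')) = l * ((h+h')*(l+l')) by linear_combination (l+l') * hcol]
        exact mul_le_mul_of_nonneg_left hp3 hl.le
      nlinarith [h1]
    · exact mul_nonneg (div_nonneg hl'.le hll'.le) hp1
    · exact mul_nonneg (div_nonneg hl'.le hll'.le) hp2
    · show h' * l' ≤ h' * (l' / (l+l') * p.1) + l' * (l' / (l+l') * p.2)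
      rw [show h' * (l' / (l+l') * p.1) + l' * (l' / (l+l') * p.2) = (l' * (h' * p.1 + l' * p.2))/(l+l') by ring,
        le_div_iff₀ hll']
      have h1 : (l + l') * (h' * (l + l')) ≤ (l + l') * (h' * p.1 + l' * p.2) := by
        rw [E', show (l+l') * (h'*(l+l')) = l' * ((h+h')*(l+l')) by linear_combination (-(l+l')) * hcol]
        exact mul_le_mul_of_nonneg_left hp3 hl'.le
      nlinarith [h1]
    · show (l / (l+l')) • p + (l' / (l+l')) • p = p
      rw [← add_smul, show l / (l+l') + l' / (l+l') = 1 by field_simp]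
      exact one_smul _ _

noncomputable def msum (L : List (ℝ × ℝ)) : Set (ℝ × ℝ) := (L.map fun p => Epoly p.1 p.2).sum

noncomputable def len (L : List (ℝ × ℝ)) (s : ℝ) : ℝ :=
  (L.map fun p => if p.2 / p.1 = s then p.1 else 0).sum


lemma msum_nil : msum [] = 0 := rfl
lemma msum_cons (p : ℝ × ℝ) (T : List (ℝ × ℝ)) : msum (p :: T) = Epoly p.1 p.2 + msum T := by
  simp [msum]

lemma len_nil (s : ℝ) : len [] s = 0 := rfl
lemma len_cons (p : ℝ × ℝ) (T : List (ℝ × ℝ)) (s : ℝ) :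
    len (p :: T) s = (if p.2 / p.1 = s then p.1 else 0) + len T s := by
  simp [len]

lemma msum_perm {L L' : List (ℝ × ℝ)} (h : L.Perm L') : msum L = msum L' :=
  (h.map _).sum_eq

lemma len_perm {L L' : List (ℝ × ℝ)} (h : L.Perm L') (s : ℝ) : len L s = len L' s :=
  (h.map _).sum_eq

lemma PosList_perm {L L' : List (ℝ × ℝ)} (h : L.Perm L') (hL : PosList L) : PosList L' :=
  fun p hp => hL p (h.symm.subset hp)

lemma PosList_cons {p : ℝ × ℝ} {T : List (ℝ × ℝ)} (h : PosList (p :: T)) :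
    (0 < p.1 ∧ 0 < p.2) ∧ PosList T :=
  ⟨h p (List.mem_cons_self), fun q hq => h q (List.mem_cons_of_mem p hq)⟩

lemma len_nonneg {L : List (ℝ × ℝ)} (hL : PosList L) (s : ℝ) : 0 ≤ len L s := by
  induction L with
  | nil => simp [len_nil]
  | cons p T ih =>
    rw [len_cons]
    obtain ⟨hp, hT⟩ := PosList_cons hL
    have h2 := ih hT
    split_ifs <;> linarith [hp.1]

lemma exists_slope {L : List (ℝ × ℝ)} (s : ℝ) (h : len L s ≠ 0) :
    ∃ q ∈ L, q.2 / q.1 = s := by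
  induction L with
  | nil => simp [len_nil] at h
  | cons p T ih =>
    rw [len_cons] at h
    by_cases hp : p.2 / p.1 = s
    · exact ⟨p, List.mem_cons_self, hp⟩
    · rw [if_neg hp, zero_add] at h
      obtain ⟨q, hq, hqs⟩ := ih h
      exact ⟨q, List.mem_cons_of_mem p hq, hqs⟩

/-- Splitting the head of a list into two collinear pieces. -/
lemma split_head {a c : ℝ × ℝ} (ha : 0 < a.1 ∧ 0 < a.2) (hc : 0 < c.1)
    (hclt : c.1 < a.1) (hslope : c.2 / c.1 = a.2 / a.1) (T : List (ℝ × ℝ)) :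
    msum (a :: T) = msum (c :: (a.1 - c.1, a.2 - c.2) :: T) ∧
      (∀ σ, len (a :: T) σ = len (c :: (a.1 - c.1, a.2 - c.2) :: T) σ) ∧
      (0 < c.2 ∧ 0 < a.1 - c.1 ∧ 0 < a.2 - c.2) := by
  have hrel : c.2 * a.1 = a.2 * c.1 :=
    (div_eq_div_iff (ne_of_gt hc) (ne_of_gt ha.1)).mp hslope
  have hc2 : 0 < c.2 := by nlinarith [mul_pos ha.2 hc]
  have hr1 : (0:ℝ) < a.1 - c.1 := by linarith
  have hr2 : (0:ℝ) < a.2 - c.2 := by nlinarith [mul_pos ha.2 (sub_pos.mpr hclt)]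
  have hcol : c.2 * (a.1 - c.1) = (a.2 - c.2) * c.1 := by linarith [hrel]
  have hsplit : Epoly a.1 a.2 = Epoly c.1 c.2 + Epoly (a.1 - c.1) (a.2 - c.2) := by
    rw [Epoly_add_Epoly hc hc2 hr1 hr2 hcol]
    congr 1 <;> ring
  have hrslope : (a.2 - c.2) / (a.1 - c.1) = a.2 / a.1 := by
    rw [div_eq_div_iff (ne_of_gt hr1) (ne_of_gt ha.1)]
    nlinarith [hrel]
  refine ⟨?_, ?_, hc2, hr1, hr2⟩
  · rw [msum_cons, msum_cons, msum_cons, hsplit, add_assoc]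
  · intro σ
    rw [len_cons, len_cons, len_cons]
    simp only
    rw [hrslope, hslope]
    by_cases hσ : a.2 / a.1 = σ
    · rw [if_pos hσ, if_pos hσ, if_pos hσ]; ring
    · rw [if_neg hσ, if_neg hσ, if_neg hσ]; ring

/-- Key combinatorial lemma: equal length functions imply equal Minkowski sums. -/
lemma msum_of_len : ∀ n (L L' : List (ℝ × ℝ)), L.length + L'.length ≤ n → PosList L →
    PosList L' → (∀ s, len L s = len L' s) → msum L = msum L' := by
  intro n
  induction n with
  | zero =>
    intro L L' hlen _ _ _
    obtain ⟨h1, h2⟩ : L.length = 0 ∧ L'.length = 0 := by omega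
    rw [List.length_eq_zero_iff] at h1 h2
    rw [h1, h2]
  | succ m ih =>
    intro L L' hlen hP hP' hL
    match L with
    | [] =>
      match L' with
      | [] => rfl
      | q :: T' =>
        exfalso
        have h1 := hL (q.2 / q.1)
        rw [len_nil, len_cons, if_pos rfl] at h1
        obtain ⟨hq, hT'⟩ := PosList_cons hP'
        have := len_nonneg hT' (q.2/q.1)
        linarith
    | p :: T =>
      obtain ⟨hp, hPT⟩ := PosList_cons hP
      have hlenpos : len L' (p.2 / p.1) ≠ 0 := by
        have h1 := hL (p.2 / p.1)
        rw [len_cons, if_pos rfl] at h1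
        have := len_nonneg hPT (p.2 / p.1)
        intro h0; rw [h0] at h1; linarith
      obtain ⟨q, hqL', hqs⟩ := exists_slope _ hlenpos
      obtain ⟨T', hperm⟩ : ∃ T', L'.Perm (q :: T') := ⟨_, List.perm_cons_erase hqL'⟩
      obtain ⟨hq, hPT'⟩ := PosList_cons (PosList_perm hperm hP')
      have hmsum' : msum L' = msum (q :: T') := msum_perm hperm
      have hlen' : ∀ σ, len (p :: T) σ = len (q :: T') σ :=
        fun σ => (hL σ).trans (len_perm hperm σ)
      have hlength : L'.length = T'.length + 1 := hperm.length_eq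
      have hrel : q.2 * p.1 = p.2 * q.1 :=
        (div_eq_div_iff (ne_of_gt hq.1) (ne_of_gt hp.1)).mp hqs
      simp only [List.length_cons] at hlen
      rcases lt_trichotomy p.1 q.1 with hlt | heq | hgt
      · -- split q into p and a remainder
        have hpq : p.2 / p.1 = q.2 / q.1 := hqs.symm
        obtain ⟨e1, e2, _, hr1, hr2⟩ := split_head hq hp.1 hlt hpq T'
        have hphead : ((p.1 : ℝ), p.2) = p := rfl
        -- note c = p here
        have goal2 : msum T = msum ((q.1 - p.1, q.2 - p.2) :: T') := by
          apply ih
          · simp only [List.length_cons]; omega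
          · exact hPT
          · intro r hr
            rcases List.mem_cons.mp hr with h | h
            · subst h; exact ⟨hr1, hr2⟩
            · exact hPT' r h
          · intro σ
            have h3 := (hlen' σ).trans (e2 σ)
            rw [len_cons, len_cons, len_cons] at h3; rw [len_cons]
            exact add_left_cancel h3
        rw [msum_cons, hmsum', e1, msum_cons, goal2]
      · -- q = p
        have hq2 : q.2 = p.2 := by
          have : q.2 * p.1 = p.2 * p.1 := by rw [hrel, heq]
          exact mul_right_cancel₀ (ne_of_gt hp.1) this
        have hqp : q = p := Prod.ext heq.symm hq2
        subst hqp
        have goal2 : msum T = msum T' := by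
          apply ih
          · omega
          · exact hPT
          · exact hPT'
          · intro σ
            have h3 := hlen' σ
            rw [len_cons, len_cons] at h3
            exact add_left_cancel h3
        rw [msum_cons, hmsum', msum_cons, goal2]
      · -- split p into q and a remainder
        obtain ⟨e1, e2, _, hr1, hr2⟩ := split_head hp hq.1 hgt hqs T
        have goal2 : msum ((p.1 - q.1, p.2 - q.2) :: T) = msum T' := by
          apply ih
          · simp only [List.length_cons]; omega
          · intro r hr
            rcases List.mem_cons.mp hr with h | h
            · subst h; exact ⟨hr1, hr2⟩
            · exact hPT r h
          · exact hPT'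
          · intro σ
            have h3 := (e2 σ).symm.trans (hlen' σ)
            rw [len_cons, len_cons, len_cons] at h3; rw [len_cons]
            exact add_left_cancel h3
        rw [e1, hmsum', msum_cons q ((p.1 - q.1, p.2 - q.2) :: T), msum_cons q T', goal2]

/-! ### Linear lower bounds (support function) -/


lemma sumList_eq {L : List (ℝ × ℝ)} (hP : PosList L) :
    sumList L = convexHull ℝ (Q2 + msum L) := by
  unfold sumList msum
  congr 3
  exact List.map_congr_left fun p hp => elemPoly_eq p.1 p.2 (hP p hp).1 (hP p hp).2

noncomputable def glin (L : List (ℝ × ℝ)) (u v : ℝ) : ℝ :=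
  (L.map fun p => min (u * p.1) (v * p.2)).sum

lemma glin_nil (u v : ℝ) : glin [] u v = 0 := rfl
lemma glin_cons (p : ℝ × ℝ) (T : List (ℝ × ℝ)) (u v : ℝ) :
    glin (p :: T) u v = min (u * p.1) (v * p.2) + glin T u v := by simp [glin]

lemma Epoly_lb {l h u v : ℝ} (hl : 0 < l) (hh : 0 < h) (hu : 0 ≤ u) (hv : 0 ≤ v)
    {x : ℝ × ℝ} (hx : x ∈ Epoly l h) : min (u * l) (v * h) ≤ u * x.1 + v * x.2 := by
  obtain ⟨h1, h2, h3⟩ := hx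
  rcases le_total (u * l) (v * h) with hc | hc
  · rw [min_eq_left hc]
    nlinarith [mul_le_mul_of_nonneg_left h3 hu, mul_nonneg h2 (sub_nonneg.2 hc)]
  · rw [min_eq_right hc]
    nlinarith [mul_le_mul_of_nonneg_left h3 hv, mul_nonneg h1 (sub_nonneg.2 hc)]

lemma msum_lb {L : List (ℝ × ℝ)} (hP : PosList L) {u v : ℝ} (hu : 0 ≤ u) (hv : 0 ≤ v) :
    ∀ b ∈ msum L, glin L u v ≤ u * b.1 + v * b.2 := by
  induction L with
  | nil =>
    intro b hb
    rw [msum_nil] at hb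
    obtain rfl : b = 0 := hb
    simp [glin_nil]
  | cons p T ih =>
    obtain ⟨hp, hT⟩ := PosList_cons hP
    rintro b hb
    rw [msum_cons] at hb
    obtain ⟨x, hx, y, hy, rfl⟩ := hb
    have e1 := Epoly_lb hp.1 hp.2 hu hv hx
    have e2 := ih hT y hy
    rw [glin_cons]
    simp only [Prod.fst_add, Prod.snd_add]
    linarith

lemma glin_le {L : List (ℝ × ℝ)} (hP : PosList L) {u v : ℝ} (hu : 0 ≤ u) (hv : 0 ≤ v) :
    ∀ p ∈ sumList L, glin L u v ≤ u * p.1 + v * p.2 := by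
  rw [sumList_eq hP]
  intro p hp
  have hconv : Convex ℝ {w : ℝ × ℝ | glin L u v ≤ u * w.1 + v * w.2} :=
    convex_halfSpace_ge ⟨fun a b => by simp [Prod.fst_add, Prod.snd_add]; ring,
      fun c a => by simp [Prod.smul_def, smul_eq_mul]; ring⟩ (glin L u v)
  refine convexHull_min ?_ hconv hp
  rintro _ ⟨a, ha, b, hb, rfl⟩
  have e2 := msum_lb hP hu hv b hb
  have : 0 ≤ u * a.1 + v * a.2 := by
    have := ha.1; have := ha.2
    positivity
  simp only [Set.mem_setOf_eq, Prod.fst_add, Prod.snd_add]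
  linarith

noncomputable def wit (u v : ℝ) (L : List (ℝ × ℝ)) : ℝ × ℝ :=
  (L.map fun p => if u * p.1 ≤ v * p.2 then ((p.1 : ℝ), (0 : ℝ)) else (0, p.2)).sum

lemma wit_mem {L : List (ℝ × ℝ)} (hP : PosList L) (u v : ℝ) : wit u v L ∈ msum L := by
  induction L with
  | nil => rw [msum_nil]; rfl
  | cons p T ih =>
    obtain ⟨hp, hT⟩ := PosList_cons hP
    rw [msum_cons]
    have hhead : (if u * p.1 ≤ v * p.2 then ((p.1 : ℝ), (0 : ℝ)) else (0, p.2)) ∈ Epoly p.1 p.2 := by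
      split_ifs
      · exact ⟨hp.1.le, le_refl 0, by simp⟩
      · exact ⟨le_refl 0, hp.2.le, by simp [mul_comm]⟩
    have : wit u v (p :: T) = (if u * p.1 ≤ v * p.2 then ((p.1 : ℝ), (0 : ℝ)) else (0, p.2)) + wit u v T := by
      simp [wit]
    rw [this]
    exact Set.add_mem_add hhead (ih hT)

lemma wit_val (L : List (ℝ × ℝ)) (u v : ℝ) :
    u * (wit u v L).1 + v * (wit u v L).2 = glin L u v := by
  induction L with
  | nil => simp [wit, glin_nil]
  | cons p T ih =>
    have hw : wit u v (p :: T) = (if u * p.1 ≤ v * p.2 then ((p.1 : ℝ), (0 : ℝ)) else (0, p.2)) + wit u v T := by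
      simp [wit]
    rw [hw, glin_cons]
    simp only [Prod.fst_add, Prod.snd_add]
    split_ifs with hc
    · rw [min_eq_left hc]; simp; linarith [ih]
    · rw [min_eq_right (le_of_not_ge hc)]; simp; linarith [ih]

lemma exists_wit {L : List (ℝ × ℝ)} (hP : PosList L) (u v : ℝ) :
    ∃ w ∈ sumList L, u * w.1 + v * w.2 = glin L u v := by
  refine ⟨wit u v L, ?_, wit_val L u v⟩
  rw [sumList_eq hP]
  apply subset_convexHull
  have h0 : (0 : ℝ × ℝ) ∈ Q2 := ⟨le_refl 0, le_refl 0⟩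
  have := Set.add_mem_add h0 (wit_mem hP u v)
  rwa [zero_add] at this

lemma glin_invariant {L L' : List (ℝ × ℝ)} (hP : PosList L) (hP' : PosList L')
    (heq : sumList L = sumList L') {u v : ℝ} (hu : 0 ≤ u) (hv : 0 ≤ v) :
    glin L u v = glin L' u v := by
  apply le_antisymm
  · obtain ⟨w, hw, hval⟩ := exists_wit hP' u v
    rw [← hval]
    exact glin_le hP hu hv w (heq ▸ hw)
  · obtain ⟨w, hw, hval⟩ := exists_wit hP u v
    rw [← hval]
    exact glin_le hP' hu hv w (heq.symm ▸ hw)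

/-! ### Recovering `len` from `glin` -/

lemma foldr_min_le_init (l : List ℝ) (a : ℝ) : l.foldr min a ≤ a := by
  induction l with
  | nil => simp
  | cons x t ih => simp only [List.foldr_cons]; exact le_trans (min_le_right _ _) ih

lemma foldr_min_le_mem {l : List ℝ} {a x : ℝ} (hx : x ∈ l) : l.foldr min a ≤ x := by
  induction l with
  | nil => simp at hx
  | cons y t ih =>
    simp only [List.foldr_cons]
    rcases List.mem_cons.mp hx with rfl | h
    · exact min_le_left _ _
    · exact le_trans (min_le_right _ _) (ih h)

lemma foldr_min_pos {l : List ℝ} {a : ℝ} (ha : 0 < a) (hl : ∀ x ∈ l, 0 < x) :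
    0 < l.foldr min a := by
  induction l with
  | nil => simpa
  | cons y t ih =>
    simp only [List.foldr_cons]
    exact lt_min (hl y (List.mem_cons_self))
      (ih fun x hx => hl x (List.mem_cons_of_mem y hx))

lemma elem_second_diff {l h s δ : ℝ} (hl : 0 < l) (hh : 0 < h) (hs : 0 < s) (hδ : 0 < δ)
    (hbound : h / l = s ∨ δ ≤ |1/s - l/h|) :
    min (1 * l) ((1/s + δ) * h) + min (1 * l) ((1/s - δ) * h) - 2 * min (1 * l) ((1/s) * h)
      = if h / l = s then -(δ * h) else 0 := by
  simp only [one_mul]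
  by_cases hc : h / l = s
  · rw [if_pos hc]
    have hls : (1/s) * h = l := by
      rw [← hc]; field_simp
    rw [hls]
    have e1 : min l ((1/s + δ) * h) = l := by
      apply min_eq_left; nlinarith [hls]
    have e2 : min l ((1/s - δ) * h) = (1/s - δ) * h := by
      apply min_eq_right; nlinarith [hls]
    rw [e1, e2, min_self]; nlinarith [hls]
  · rw [if_neg hc]
    rcases hbound with hb | hb
    · exact absurd hb hc
    rcases abs_cases (1/s - l/h) with ⟨he, _⟩ | ⟨he, _⟩
    · -- l/h ≤ 1/s - δ : all three mins are l
      rw [he] at hb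
      have key : ∀ t : ℝ, l/h ≤ t → min l (t * h) = l := by
        intro t ht
        apply min_eq_left
        rw [div_le_iff₀ hh] at ht
        linarith
      rw [key _ (by linarith), key _ (by linarith), key _ (by linarith)]
      ring
    · -- 1/s + δ ≤ l/h : all three mins are t*h
      rw [he] at hb
      have key : ∀ t : ℝ, t ≤ l/h → min l (t * h) = t * h := by
        intro t ht
        apply min_eq_right
        rw [le_div_iff₀ hh] at ht
        linarith
      rw [key _ (by linarith), key _ (by linarith), key _ (by linarith)]
      ring

lemma glin_second_diff {L : List (ℝ × ℝ)} (hP : PosList L) {s δ : ℝ} (hs : 0 < s) (hδ : 0 < δ)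
    (hbound : ∀ p ∈ L, p.2 / p.1 = s ∨ δ ≤ |1/s - p.1/p.2|) :
    glin L 1 (1/s + δ) + glin L 1 (1/s - δ) - 2 * glin L 1 (1/s) = -(δ * s * len L s) := by
  induction L with
  | nil => simp [glin_nil, len_nil]
  | cons p T ih =>
    obtain ⟨hp, hT⟩ := PosList_cons hP
    have e1 := elem_second_diff hp.1 hp.2 hs hδ (hbound p (List.mem_cons_self))
    have e2 := ih hT (fun q hq => hbound q (List.mem_cons_of_mem p hq))
    rw [glin_cons, glin_cons, glin_cons, len_cons]
    by_cases hc : p.2 / p.1 = s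
    · rw [if_pos hc] at e1 ⊢
      have hp2 : p.2 = s * p.1 := (div_eq_iff (ne_of_gt hp.1)).mp hc
      nlinarith [e1, e2, hp2]
    · rw [if_neg hc] at e1 ⊢
      linarith [e1, e2]

lemma len_zero_of_nonpos {L : List (ℝ × ℝ)} (hP : PosList L) {s : ℝ} (hs : ¬ 0 < s) :
    len L s = 0 := by
  induction L with
  | nil => rfl
  | cons p T ih =>
    obtain ⟨hp, hT⟩ := PosList_cons hP
    rw [len_cons, ih hT, if_neg, add_zero]
    intro hc
    exact hs (hc ▸ div_pos hp.2 hp.1)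

lemma len_invariant {L L' : List (ℝ × ℝ)} (hP : PosList L) (hP' : PosList L')
    (hg : ∀ u v : ℝ, 0 ≤ u → 0 ≤ v → glin L u v = glin L' u v) (s : ℝ) :
    len L s = len L' s := by
  by_cases hs : 0 < s
  swap
  · rw [len_zero_of_nonpos hP hs, len_zero_of_nonpos hP' hs]
  -- choose δ
  set val : ℝ × ℝ → ℝ := fun p => if p.2 / p.1 = s then 1/s else |1/s - p.1/p.2| with hval
  set δ : ℝ := ((L ++ L').map val).foldr min (1/s) with hδdef
  have hδt : δ ≤ 1/s := foldr_min_le_init _ _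
  have hδ : 0 < δ := by
    apply foldr_min_pos (by positivity)
    intro x hx
    obtain ⟨p, hpmem, rfl⟩ := List.mem_map.mp hx
    have hp : 0 < p.1 ∧ 0 < p.2 := by
      rcases List.mem_append.mp hpmem with h | h
      exacts [hP p h, hP' p h]
    by_cases hc : p.2 / p.1 = s
    · simp only [hval, if_pos hc]; positivity
    · simp only [hval, if_neg hc]
      rw [abs_pos, sub_ne_zero]
      intro hcontra
      apply hc
      rw [div_eq_div_iff (ne_of_gt hs) (ne_of_gt hp.2)] at hcontra
      rw [div_eq_iff (ne_of_gt hp.1)]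
      linear_combination hcontra
  have hbound : ∀ M : List (ℝ × ℝ), (∀ p ∈ M, p ∈ L ++ L') →
      ∀ p ∈ M, p.2 / p.1 = s ∨ δ ≤ |1/s - p.1/p.2| := by
    intro M hM p hp
    by_cases hc : p.2 / p.1 = s
    · exact Or.inl hc
    · right
      have : val p ∈ (L ++ L').map val := List.mem_map_of_mem (f := val) (hM p hp)
      have h2 := foldr_min_le_mem (a := 1/s) this
      rw [hval] at h2
      simp only [if_neg hc] at h2
      exact h2
  have key1 := glin_second_diff hP hs hδ
    (hbound L (fun p hp => List.mem_append.mpr (Or.inl hp)))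
  have key2 := glin_second_diff hP' hs hδ
    (hbound L' (fun p hp => List.mem_append.mpr (Or.inr hp)))
  have h1s : (0:ℝ) < 1/s := by positivity
  have g1 := hg 1 (1/s + δ) (by norm_num) (by linarith)
  have g2 := hg 1 (1/s - δ) (by norm_num) (by linarith)
  have g3 := hg 1 (1/s) (by norm_num) (by positivity)
  have hthis : -(δ * s * len L s) = -(δ * s * len L' s) := by
    rw [← key1, ← key2, g1, g2, g3]
  have hne : δ * s ≠ 0 := ne_of_gt (mul_pos hδ hs)
  have h' : δ * s * len L s = δ * s * len L' s := neg_injective hthis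
  exact mul_left_cancel₀ hne h'

/-! ### The product of decompositions -/


lemma PosList_prodList {A B : List (ℝ × ℝ)} (hA : PosList A) (hB : PosList B) :
    PosList (prodList A B) := by
  intro x hx
  obtain ⟨p, hp, hx⟩ := List.mem_flatMap.mp hx
  obtain ⟨q, hq, rfl⟩ := List.mem_map.mp hx
  obtain ⟨hp1, hp2⟩ := hA p hp
  obtain ⟨hq1, hq2⟩ := hB q hq
  exact ⟨mul_pos hp1 hq1, lt_min (mul_pos hp1 hq2) (mul_pos hq1 hp2)⟩

lemma prod_slope {p q : ℝ × ℝ} (hp : 0 < p.1 ∧ 0 < p.2) (hq : 0 < q.1 ∧ 0 < q.2) :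
    min (p.1 * q.2) (q.1 * p.2) / (p.1 * q.1) = min (p.2 / p.1) (q.2 / q.1) := by
  rw [← min_div_div_right (mul_pos hp.1 hq.1).le]
  rw [min_comm]
  congr 1
  · rw [mul_comm p.1 q.1, mul_div_mul_left _ _ (ne_of_gt hq.1)]
  · rw [mul_div_mul_left _ _ (ne_of_gt hp.1)]

/-- Generic sum over a product list. -/
lemma prod_map_sum (F : ℝ × ℝ → ℝ) (A B : List (ℝ × ℝ)) :
    ((prodList A B).map F).sum =
      (A.map fun p => ((B.map fun q => F (p.1 * q.1, min (p.1 * q.2) (q.1 * p.2))).sum)).sum := by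
  induction A with
  | nil => rfl
  | cons a A' ih =>
    simp only [prodList, List.flatMap_cons, List.map_append, List.sum_append, List.map_map,
      List.map_cons, List.sum_cons] at *
    rw [← ih]
    rfl

lemma sum_map_linear {α : Type*} (B : List α) (f g : α → ℝ) (c d : ℝ) :
    (B.map fun q => c * f q + d * g q).sum = c * (B.map f).sum + d * (B.map g).sum := by
  induction B with
  | nil => simp
  | cons b B' ih => simp [ih]; ring

lemma pair_ite (sp sq s lp lq : ℝ) :
    (if min sp sq = s then lp * lq else 0) =
      (if sp = s then lp else 0) * (if s ≤ sq then lq else 0) +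
        (if s < sp then lp else 0) * (if sq = s then lq else 0) := by
  rcases le_total sp sq with h | h
  · rw [min_eq_left h]
    split_ifs <;> first | ring1 | linarith
  · rw [min_eq_right h]
    split_ifs with h1 h2 h3 h4 <;>
      first | ring1 | linarith | (rcases lt_or_gt_of_ne h1 with hx | hx <;> linarith) |
        (rcases lt_or_gt_of_ne h2 with hx | hx <;> linarith)

lemma sum_map_linear' {α : Type*} (B : List α) (f g : α → ℝ) (c d : ℝ) :
    (B.map fun q => f q * c + g q * d).sum = (B.map f).sum * c + (B.map g).sum * d := by
  induction B with
  | nil => simp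
  | cons b B' ih => simp [ih]; ring

noncomputable def lenGE (L : List (ℝ × ℝ)) (s : ℝ) : ℝ :=
  (L.map fun p => if s ≤ p.2 / p.1 then p.1 else 0).sum

noncomputable def lenGT (L : List (ℝ × ℝ)) (s : ℝ) : ℝ :=
  (L.map fun p => if s < p.2 / p.1 then p.1 else 0).sum

lemma len_prod_formula {A B : List (ℝ × ℝ)} (hA : PosList A) (hB : PosList B) (s : ℝ) :
    len (prodList A B) s = len A s * lenGE B s + lenGT A s * len B s := by
  unfold len
  rw [prod_map_sum (fun p => if p.2 / p.1 = s then p.1 else 0) A B]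
  have inner : ∀ p ∈ A, ((B.map fun q =>
      if (p.1 * q.1, min (p.1 * q.2) (q.1 * p.2)).2 / (p.1 * q.1, min (p.1 * q.2) (q.1 * p.2)).1 = s
      then (p.1 * q.1, min (p.1 * q.2) (q.1 * p.2)).1 else 0)).sum
      = (if p.2 / p.1 = s then p.1 else 0) * lenGE B s
        + (if s < p.2 / p.1 then p.1 else 0) * len B s := by
    intro p hp
    have hp' := hA p hp
    have step : ∀ q ∈ B, (if (p.1 * q.1, min (p.1 * q.2) (q.1 * p.2)).2 /
          (p.1 * q.1, min (p.1 * q.2) (q.1 * p.2)).1 = s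
        then (p.1 * q.1, min (p.1 * q.2) (q.1 * p.2)).1 else 0)
        = (if p.2 / p.1 = s then p.1 else 0) * (if s ≤ q.2 / q.1 then q.1 else 0)
          + (if s < p.2 / p.1 then p.1 else 0) * (if q.2 / q.1 = s then q.1 else 0) := by
      intro q hq
      have hq' := hB q hq
      simp only
      rw [prod_slope hp' hq', pair_ite]
    rw [List.map_congr_left step, sum_map_linear, lenGE, len]
  rw [List.map_congr_left inner, sum_map_linear', len, lenGT]

open Classical in
/-- Grouping a list sum over a finite set of slope values. -/
lemma group_sum (P : ℝ → Prop) : ∀ (B : List (ℝ × ℝ)) (S : Finset ℝ),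
    (∀ q ∈ B, q.2 / q.1 ∈ S) →
    (∑ x ∈ S, if P x then len B x else 0) = (B.map fun q => if P (q.2 / q.1) then q.1 else 0).sum := by
  intro B
  induction B with
  | nil => intro S _; simp [len_nil]
  | cons q T ih =>
    intro S hS
    have e1 : ∀ x ∈ S, (if P x then len (q :: T) x else 0)
        = (if q.2/q.1 = x then (if P x then q.1 else 0) else 0) + (if P x then len T x else 0) := by
      intro x hx
      rw [len_cons]
      by_cases h1 : P x
      · rw [if_pos h1, if_pos h1, if_pos h1]
      · rw [if_neg h1, if_neg h1, if_neg h1, add_zero]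
        split_ifs <;> rfl
    rw [Finset.sum_congr rfl e1, Finset.sum_add_distrib]
    rw [Finset.sum_ite_eq S (q.2/q.1) (fun x => if P x then q.1 else 0)]
    rw [if_pos (hS q (List.mem_cons_self))]
    rw [ih S (fun r hr => hS r (List.mem_cons_of_mem q hr))]
    rw [List.map_cons, List.sum_cons]

lemma lenGE_congr {B B' : List (ℝ × ℝ)} (hlen : ∀ s, len B s = len B' s) (s : ℝ) :
    lenGE B s = lenGE B' s := by
  classical
  set S : Finset ℝ := ((B ++ B').map fun q => q.2 / q.1).toFinset with hS
  have hc : ∀ q ∈ B, q.2 / q.1 ∈ S := fun q hq => List.mem_toFinset.mpr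
    (List.mem_map_of_mem (List.mem_append.mpr (Or.inl hq)))
  have hc' : ∀ q ∈ B', q.2 / q.1 ∈ S := fun q hq => List.mem_toFinset.mpr
    (List.mem_map_of_mem (List.mem_append.mpr (Or.inr hq)))
  have e1 := group_sum (fun x => s ≤ x) B S hc
  have e2 := group_sum (fun x => s ≤ x) B' S hc'
  unfold lenGE
  rw [← e1, ← e2]
  exact Finset.sum_congr rfl fun x _ => by rw [hlen x]

lemma lenGT_congr {B B' : List (ℝ × ℝ)} (hlen : ∀ s, len B s = len B' s) (s : ℝ) :
    lenGT B s = lenGT B' s := by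
  classical
  set S : Finset ℝ := ((B ++ B').map fun q => q.2 / q.1).toFinset with hS
  have hc : ∀ q ∈ B, q.2 / q.1 ∈ S := fun q hq => List.mem_toFinset.mpr
    (List.mem_map_of_mem (List.mem_append.mpr (Or.inl hq)))
  have hc' : ∀ q ∈ B', q.2 / q.1 ∈ S := fun q hq => List.mem_toFinset.mpr
    (List.mem_map_of_mem (List.mem_append.mpr (Or.inr hq)))
  have e1 := group_sum (fun x => s < x) B S hc
  have e2 := group_sum (fun x => s < x) B' S hc'
  unfold lenGT
  rw [← e1, ← e2]
  exact Finset.sum_congr rfl fun x _ => by rw [hlen x]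

/-! ### Master equivalences -/

lemma sumList_eq_of_len {L L' : List (ℝ × ℝ)} (hP : PosList L) (hP' : PosList L')
    (hlen : ∀ s, len L s = len L' s) : sumList L = sumList L' := by
  rw [sumList_eq hP, sumList_eq hP',
    msum_of_len (L.length + L'.length) L L' le_rfl hP hP' hlen]

lemma len_eq_of_sumList {L L' : List (ℝ × ℝ)} (hP : PosList L) (hP' : PosList L')
    (heq : sumList L = sumList L') (s : ℝ) : len L s = len L' s :=
  len_invariant hP hP' (fun _ _ hu hv => glin_invariant hP hP' heq hu hv) s

lemma sumList_perm {L L' : List (ℝ × ℝ)} (h : L.Perm L') : sumList L = sumList L' := by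
  unfold sumList
  rw [(h.map _).sum_eq]

/-! ### List manipulations for the product -/

def fmul (p q : ℝ × ℝ) : ℝ × ℝ := (p.1 * q.1, min (p.1 * q.2) (q.1 * p.2))

lemma prodList_eq (A B : List (ℝ × ℝ)) : prodList A B = A.flatMap fun p => B.map (fmul p) := rfl

lemma fmul_comm (p q : ℝ × ℝ) : fmul p q = fmul q p := by
  unfold fmul
  rw [mul_comm, min_comm]

lemma fmul_assoc {p q r : ℝ × ℝ} (hp : 0 < p.1 ∧ 0 < p.2) (hq : 0 < q.1 ∧ 0 < q.2)
    (hr : 0 < r.1 ∧ 0 < r.2) : fmul (fmul p q) r = fmul p (fmul q r) := by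
  unfold fmul
  simp only
  refine Prod.ext (mul_assoc _ _ _) ?_
  simp only
  rw [mul_min_of_nonneg _ _ hr.1.le, mul_min_of_nonneg _ _ hp.1.le, ← min_assoc]
  congr 1
  · congr 1 <;> ring
  · ring

lemma flatMap_cons_perm {β γ : Type*} (B : List β) (h : β → γ) (k : β → List γ) :
    (B.flatMap fun q => h q :: k q).Perm (B.map h ++ B.flatMap k) := by
  have := List.flatMap_append_perm B (fun q => [h q]) k
  simpa [← List.map_eq_flatMap] using this.symm

lemma flatMap_swap_perm {α β γ : Type*} (g : α → β → γ) : ∀ (A : List α) (B : List β),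
    (A.flatMap fun p => B.map (g p)).Perm (B.flatMap fun q => A.map (fun p => g p q)) := by
  intro A
  induction A with
  | nil => intro B; simp
  | cons a A' ih =>
    intro B
    simp only [List.flatMap_cons, List.map_cons]
    refine (List.Perm.append_left (B.map (g a)) (ih B)).trans ?_
    exact (flatMap_cons_perm B (g a) (fun q => A'.map fun p => g p q)).symm

lemma prodList_comm_perm (A B : List (ℝ × ℝ)) : (prodList A B).Perm (prodList B A) := by
  rw [prodList_eq, prodList_eq]
  have := flatMap_swap_perm fmul A B
  convert this using 2
  funext q
  exact List.map_congr_left fun p _ => (fmul_comm q p)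

lemma prodList_map_head {a : ℝ × ℝ} (ha : 0 < a.1 ∧ 0 < a.2) :
    ∀ (B C : List (ℝ × ℝ)), PosList B → PosList C →
    prodList (B.map (fmul a)) C = (prodList B C).map (fmul a) := by
  intro B
  induction B with
  | nil => intro C _ _; rfl
  | cons b B' ih =>
    intro C hB hC
    obtain ⟨hb, hB'⟩ := PosList_cons hB
    rw [prodList_eq, prodList_eq, List.map_cons, List.flatMap_cons, List.flatMap_cons,
      List.map_append, List.map_map]
    congr 1
    · refine List.map_congr_left fun r hr => ?_
      show fmul (fmul a b) r = fmul a (fmul b r)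
      exact fmul_assoc ha hb (hC r hr)
    · exact ih C hB' hC

lemma prodList_assoc : ∀ (A B C : List (ℝ × ℝ)), PosList A → PosList B → PosList C →
    prodList (prodList A B) C = prodList A (prodList B C) := by
  intro A
  induction A with
  | nil => intro B C _ _ _; rfl
  | cons a A' ih =>
    intro B C hA hB hC
    obtain ⟨ha, hA'⟩ := PosList_cons hA
    have h1 : prodList (a :: A') B = B.map (fmul a) ++ prodList A' B := by
      rw [prodList_eq, List.flatMap_cons]; rfl
    have h2 : ∀ X Y : List (ℝ × ℝ), prodList (X ++ Y) C = prodList X C ++ prodList Y C := by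
      intro X Y; rw [prodList_eq, List.flatMap_append]; rfl
    have h3 : prodList (a :: A') (prodList B C)
        = (prodList B C).map (fmul a) ++ prodList A' (prodList B C) := by
      rw [prodList_eq, List.flatMap_cons]; rfl
    rw [h1, h2, h3, prodList_map_head ha B C hB hC, ih B C hA' hB hC]

lemma Q2_add_Q2 : Q2 + Q2 = Q2 := by
  apply le_antisymm
  · rintro _ ⟨a, ha, b, hb, rfl⟩
    exact ⟨by simp [Prod.fst_add]; exact add_nonneg ha.1 hb.1,
      by simp [Prod.snd_add]; exact add_nonneg ha.2 hb.2⟩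
  · intro x hx
    exact ⟨x, hx, 0, ⟨le_refl 0, le_refl 0⟩, by simp⟩


lemma sumList_append (A B : List (ℝ × ℝ)) :
    sumList (A ++ B) = polySum (sumList A) (sumList B) := by
  unfold sumList polySum
  rw [List.map_append, List.sum_append]
  set SA := (A.map fun p => elemPoly p.1 p.2).sum with hSA
  set SB := (B.map fun p => elemPoly p.1 p.2).sum with hSB
  rw [← convexHull_add (Q2 + SA) (Q2 + SB),
    (convex_convexHull ℝ ((Q2 + SA) + (Q2 + SB))).convexHull_eq,
    add_add_add_comm Q2 SA Q2 SB, Q2_add_Q2]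

/-- The product of Newton polygons is well defined (independent of the decompositions into
elementary polygons), commutative, associative, and distributive over the sum. -/
theorem prod_welldef_comm_assoc_distrib :
    (∀ L₁ L₂ L₁' L₂' : List (ℝ × ℝ), PosList L₁ → PosList L₂ → PosList L₁' → PosList L₂' →
      sumList L₁ = sumList L₁' → sumList L₂ = sumList L₂' →
      sumList (prodList L₁ L₂) = sumList (prodList L₁' L₂')) ∧
    (∀ L₁ L₂ : List (ℝ × ℝ), PosList L₁ → PosList L₂ →
      sumList (prodList L₁ L₂) = sumList (prodList L₂ L₁)) ∧
    (∀ L₁ L₂ L₃ : List (ℝ × ℝ), PosList L₁ → PosList L₂ → PosList L₃ →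
      sumList (prodList (prodList L₁ L₂) L₃) = sumList (prodList L₁ (prodList L₂ L₃))) ∧
    (∀ L₁ L₂ L₃ : List (ℝ × ℝ), PosList L₁ → PosList L₂ → PosList L₃ →
      sumList (prodList L₁ (L₂ ++ L₃)) =
        polySum (sumList (prodList L₁ L₂)) (sumList (prodList L₁ L₃))) := by
  refine ⟨?_, ?_, ?_, ?_⟩
  · intro L₁ L₂ L₁' L₂' h₁ h₂ h₁' h₂' e₁ e₂
    apply sumList_eq_of_len (PosList_prodList h₁ h₂) (PosList_prodList h₁' h₂')
    intro s
    have l1 := len_eq_of_sumList h₁ h₁' e₁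
    have l2 := len_eq_of_sumList h₂ h₂' e₂
    rw [len_prod_formula h₁ h₂ s, len_prod_formula h₁' h₂' s, l1 s, l2 s,
      lenGE_congr l2 s, lenGT_congr l1 s]
  · intro L₁ L₂ _ _
    exact sumList_perm (prodList_comm_perm L₁ L₂)
  · intro L₁ L₂ L₃ h₁ h₂ h₃
    rw [prodList_assoc L₁ L₂ L₃ h₁ h₂ h₃]
  · intro L₁ L₂ L₃ _ _ _
    have hperm : (prodList L₁ (L₂ ++ L₃)).Perm (prodList L₁ L₂ ++ prodList L₁ L₃) := by
      rw [prodList_eq]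
      simp only [List.map_append]
      exact (List.flatMap_append_perm L₁ (fun p => L₂.map (fmul p)) (fun p => L₃.map (fmul p))).symm
    rw [sumList_perm hperm, sumList_append]
end

section
/- For a Newton polygon N₁ = Σᵢ {ℓᵢ/hᵢ} of finite area, h(N₁ * N₁) = Σ_{i,j} min(ℓᵢh_j, ℓ_j hᵢ) = 2·Vol(N₁), where Vol(N₁) is the area of the complement in ℝ≥0² of the convex region bounded by N₁. -/
open Pointwise MeasureTheory

/-- The height of a Newton polygon: its intercept with the vertical axis. -/
noncomputable def polyHt (N : Set (ℝ × ℝ)) : ℝ := sInf {y | (0, y) ∈ N}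

/-- The area enclosed by a Newton polygon: the area of the complement of the region in the
positive quadrant. -/
noncomputable def polyVol (N : Set (ℝ × ℝ)) : ℝ := (volume (Q2 \ N)).toReal

/-- clip to [0,1] -/
noncomputable def clip (t : ℝ) : ℝ := min 1 (max 0 t)

lemma clip_of_nonpos {t : ℝ} (h : t ≤ 0) : clip t = 0 := by
  simp [clip, max_eq_left h]
lemma clip_of_mem {t : ℝ} (h0 : 0 ≤ t) (h1 : t ≤ 1) : clip t = t := by
  simp [clip, max_eq_right h0, min_eq_right h1]
lemma clip_nonneg (t : ℝ) : 0 ≤ clip t := le_min zero_le_one (le_max_left _ _)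
lemma clip_le_one (t : ℝ) : clip t ≤ 1 := min_le_left _ _
lemma clip_mono : Monotone clip := fun a b hab => by
  exact min_le_min le_rfl (max_le_max le_rfl hab)
lemma clip_lip {s t : ℝ} (h : s ≤ t) : clip t - clip s ≤ t - s := by
  unfold clip
  rcases le_total t 0 with ht | ht
  · rw [max_eq_left ht, max_eq_left (h.trans ht)]; simp; linarith
  · rcases le_total s 0 with hs | hs
    · rw [max_eq_left hs, max_eq_right ht]
      have h1 : min 1 t ≤ t := min_le_right _ _
      have h2 : (0:ℝ) ≤ min 1 0 := by simp
      simp only [min_def]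
      split <;> norm_num <;> linarith
    · rw [max_eq_right ht, max_eq_right hs]
      rcases le_total t 1 with h1 | h1
      · rw [min_eq_right h1, min_eq_right (h.trans h1)]
      · rw [min_eq_left h1]
        rcases le_total s 1 with h2 | h2
        · rw [min_eq_right h2]; linarith
        · rw [min_eq_left h2]; linarith

/-- The lower boundary function of the polygon of a (sorted) list. -/
noncomputable def F : List (ℝ × ℝ) → ℝ → ℝ
  | [], _ => 0
  | (l, h) :: L, x => h * clip (1 - x / l) + F L (x - l)

lemma F_nil (x : ℝ) : F [] x = 0 := rfl
lemma F_cons (l h : ℝ) (L : List (ℝ × ℝ)) (x : ℝ) :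
    F ((l, h) :: L) x = h * clip (1 - x / l) + F L (x - l) := rfl

lemma F_nonneg {L : List (ℝ × ℝ)} (hL : PosList L) (x : ℝ) : 0 ≤ F L x := by
  induction L generalizing x with
  | nil => simp [F_nil]
  | cons p L ih =>
      obtain ⟨l, h⟩ := p
      have hp := hL (l, h) (List.mem_cons_self)
      have h2 : PosList L := fun q hq => hL q (List.mem_cons_of_mem _ hq)
      rw [F_cons]
      have := clip_nonneg (1 - x / l)
      nlinarith [ih h2 (x - l)]

lemma F_nonpos_eq {L : List (ℝ × ℝ)} (hL : PosList L) {x : ℝ} (hx : x ≤ 0) :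
    F L x = (L.map Prod.snd).sum := by
  induction L generalizing x with
  | nil => simp [F_nil]
  | cons p L ih =>
      obtain ⟨l, h⟩ := p
      have hp := hL (l, h) (List.mem_cons_self)
      have h2 : PosList L := fun q hq => hL q (List.mem_cons_of_mem _ hq)
      rw [F_cons]
      have h1 : (1 : ℝ) ≤ 1 - x / l := by
        have : x / l ≤ 0 := div_nonpos_of_nonpos_of_nonneg hx hp.1.le
        linarith
      have : clip (1 - x / l) = 1 := le_antisymm (clip_le_one _)
        (le_min le_rfl (le_max_of_le_right h1))
      rw [this, ih h2 (by linarith [hp.1] : x - l ≤ 0)]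
      simp only [List.map_cons, List.sum_cons]; ring

lemma F_antitone {L : List (ℝ × ℝ)} (hL : PosList L) : Antitone (F L) := by
  induction L with
  | nil => intro a b _; simp [F_nil]
  | cons p L ih =>
      obtain ⟨l, h⟩ := p
      have hp := hL (l, h) (List.mem_cons_self)
      have h2 : PosList L := fun q hq => hL q (List.mem_cons_of_mem _ hq)
      intro a b hab
      rw [F_cons, F_cons]
      have c1 : clip (1 - b / l) ≤ clip (1 - a / l) := by
        apply clip_mono
        gcongr
        exact hp.1.le
      have := ih h2 (by linarith : a - l ≤ b - l)
      nlinarith [hp.2]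

lemma F_lip {L : List (ℝ × ℝ)} (hL : PosList L) {l h : ℝ} (hl : 0 < l) (hh : 0 < h)
    (hs : ∀ q ∈ L, q.2 * l ≤ h * q.1) {x y : ℝ} (hxy : x ≤ y) :
    F L x ≤ F L y + h / l * (y - x) := by
  induction L generalizing x y with
  | nil =>
      simp only [F_nil]
      have : 0 ≤ h / l * (y - x) := mul_nonneg (by positivity) (by linarith)
      linarith
  | cons p L ih =>
      obtain ⟨l1, h1⟩ := p
      have hp1 : (0:ℝ) < l1 := (hL (l1, h1) (List.mem_cons_self)).1
      have hp2 : (0:ℝ) < h1 := (hL (l1, h1) (List.mem_cons_self)).2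
      have h2 : PosList L := fun q hq => hL q (List.mem_cons_of_mem _ hq)
      have hs2 : ∀ q ∈ L, q.2 * l ≤ h * q.1 := fun q hq => hs q (List.mem_cons_of_mem _ hq)
      have hkey : h1 * l ≤ h * l1 := hs (l1, h1) (List.mem_cons_self)
      have main : ∀ u v : ℝ, u ≤ v → (v ≤ l1 ∨ l1 ≤ u) →
          F ((l1, h1) :: L) u ≤ F ((l1, h1) :: L) v + h / l * (v - u) := by
        intro u v huv hcase
        rw [F_cons, F_cons]
        rcases hcase with hv | hu
        · have e1 : F L (u - l1) = F L (v - l1) := by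
            rw [F_nonpos_eq h2 (by linarith : u - l1 ≤ 0),
              F_nonpos_eq h2 (by linarith : v - l1 ≤ 0)]
          have hc : clip (1 - u / l1) - clip (1 - v / l1) ≤ (1 - u / l1) - (1 - v / l1) :=
            clip_lip (by gcongr)
          have h3 : (1 - u / l1) - (1 - v / l1) = (v - u) / l1 := by ring
          have h4 : h1 * ((v - u) / l1) ≤ h / l * (v - u) := by
            have e : h1 * ((v - u) / l1) = (h1 * (v - u)) / l1 := by ring
            have e2 : h / l * (v - u) = (h * (v - u)) / l := by ring
            rw [e, e2, div_le_div_iff₀ hp1 hl]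
            nlinarith
          nlinarith
        · have e0 : clip (1 - u / l1) = 0 := clip_of_nonpos (by
            have : 1 ≤ u / l1 := (one_le_div hp1).mpr hu
            linarith)
          have e0' : clip (1 - v / l1) = 0 := clip_of_nonpos (by
            have : 1 ≤ v / l1 := (one_le_div hp1).mpr (hu.trans huv)
            linarith)
          have h5 := ih h2 hs2 (by linarith : u - l1 ≤ v - l1)
          have h6 : h / l * (v - l1 - (u - l1)) = h / l * (v - u) := by ring
          rw [e0, e0']
          linarith [h6 ▸ h5]
      rcases le_total y l1 with h' | h'
      · exact main x y hxy (Or.inl h')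
      rcases le_total l1 x with h'' | h''
      · exact main x y hxy (Or.inr h'')
      · have A := main x l1 h'' (Or.inl le_rfl)
        have B := main l1 y h' (Or.inr le_rfl)
        have : h / l * (l1 - x) + h / l * (y - l1) = h / l * (y - x) := by ring
        linarith

lemma convex_Q2 : Convex ℝ Q2 := by
  have : Q2 = {p : ℝ × ℝ | 0 ≤ p.1} ∩ {p : ℝ × ℝ | 0 ≤ p.2} := rfl
  rw [this]
  exact (convex_halfSpace_ge (IsLinearMap.mk (fun a b => rfl) (fun c a => rfl)) 0).inter
    (convex_halfSpace_ge (IsLinearMap.mk (fun a b => rfl) (fun c a => rfl)) 0)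

lemma elemPoly_eq_s6 {l h : ℝ} (hl : 0 < l) (hh : 0 < h) :
    elemPoly l h = {p : ℝ × ℝ | 0 ≤ p.1 ∧ 0 ≤ p.2 ∧ l * h ≤ h * p.1 + l * p.2} := by
  apply le_antisymm
  · apply convexHull_min
    · rintro p (⟨a, rfl : a = _, b, hb, rfl⟩ | ⟨a, rfl : a = _, b, hb, rfl⟩)
      · refine ⟨by simpa using hb.1, by simpa using add_nonneg hh.le hb.2, ?_⟩
        simp only [Prod.fst_add, Prod.snd_add]
        nlinarith [hb.1, hb.2]
      · refine ⟨by simpa using add_nonneg hl.le hb.1, by simpa using hb.2, ?_⟩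
        simp only [Prod.fst_add, Prod.snd_add]
        nlinarith [hb.1, hb.2]
    · have e : {p : ℝ × ℝ | 0 ≤ p.1 ∧ 0 ≤ p.2 ∧ l * h ≤ h * p.1 + l * p.2}
          = {p : ℝ × ℝ | 0 ≤ p.1} ∩ ({p : ℝ × ℝ | 0 ≤ p.2} ∩ {p : ℝ × ℝ | l * h ≤ h * p.1 + l * p.2}) := by
        ext p; simp [and_assoc]
      rw [e]
      refine (convex_halfSpace_ge (IsLinearMap.mk (fun a b => rfl) (fun c a => rfl)) 0).inter
        ((convex_halfSpace_ge (IsLinearMap.mk (fun a b => rfl) (fun c a => rfl)) 0).inter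
          (convex_halfSpace_ge ⟨fun a b => by simp; ring, fun c a => by simp; ring⟩ (l * h)))
  · -- reverse inclusion
    intro p hp
    obtain ⟨hx, hy, hin⟩ := hp
    have habs : elemPoly l h + Q2 ⊆ elemPoly l h := by
      unfold elemPoly
      have : convexHull ℝ (({((0 : ℝ), h)} + Q2) ∪ ({(l, (0 : ℝ))} + Q2)) + Q2
          = convexHull ℝ (({((0 : ℝ), h)} + Q2) ∪ ({(l, (0 : ℝ))} + Q2)) + convexHull ℝ Q2 := by
        rw [convex_Q2.convexHull_eq]
      rw [this, ← convexHull_add]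
      apply convexHull_mono
      rw [Set.union_add, add_assoc, add_assoc, Q2_add_Q2]
    rcases le_total l p.1 with hcase | hcase
    · -- p = (l,0) + (p.1 - l, p.2)
      have : p ∈ ({((l : ℝ), (0:ℝ))} + Q2 : Set (ℝ × ℝ)) := by
        refine ⟨(l, 0), rfl, (p.1 - l, p.2), ⟨by simpa using hcase, hy⟩, ?_⟩
        ext <;> simp
      exact subset_convexHull ℝ _ (Set.mem_union_right _ this)
    · -- p.1 < l
      set t : ℝ := p.1 / l with ht
      have ht0 : 0 ≤ t := div_nonneg hx hl.le
      have ht1 : t ≤ 1 := (div_le_one hl).mpr hcase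
      have hz : ((p.1, h * (1 - t)) : ℝ × ℝ) ∈ elemPoly l h := by
        unfold elemPoly
        have h1 : ((0 : ℝ), h) ∈ (({((0 : ℝ), h)} + Q2) ∪ ({(l, (0 : ℝ))} + Q2)) :=
          Set.mem_union_left _ ⟨(0, h), rfl, 0, ⟨le_rfl, le_rfl⟩, add_zero _⟩
        have h2 : ((l : ℝ), (0 : ℝ)) ∈ (({((0 : ℝ), h)} + Q2) ∪ ({(l, (0 : ℝ))} + Q2)) :=
          Set.mem_union_right _ ⟨(l, 0), rfl, 0, ⟨le_rfl, le_rfl⟩, add_zero _⟩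
        have := (convex_convexHull ℝ _) (subset_convexHull ℝ _ h1) (subset_convexHull ℝ _ h2)
          (by linarith : (0:ℝ) ≤ 1 - t) ht0 (by ring)
        convert this using 2
        · show p.1 = (1 - t) • (0:ℝ) + t • l
          rw [ht, smul_eq_mul, smul_eq_mul, mul_zero, zero_add, div_mul_cancel₀ _ hl.ne']
        · show h * (1 - t) = (1 - t) • h + t • (0:ℝ)
          simp [mul_comm]
      apply habs
      refine ⟨(p.1, h * (1 - t)), hz, (0, p.2 - h * (1 - t)), ⟨le_rfl, ?_⟩, ?_⟩
      · show (0:ℝ) ≤ p.2 - h * (1 - t)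
        have e3 : l * (h * (1 - t)) = l * h - h * p.1 := by
          rw [ht]; field_simp
        nlinarith [hl, hin]
      · ext <;> simp

def rel (p q : ℝ × ℝ) : Prop := q.2 * p.1 ≤ p.2 * q.1

lemma elemPoly_convex (l h : ℝ) : Convex ℝ (elemPoly l h) := convex_convexHull ℝ _

lemma sumList_nil : sumList [] = Q2 := by
  unfold sumList
  simp only [List.map_nil, List.sum_nil, add_zero]
  exact convex_Q2.convexHull_eq

lemma sumList_cons (p : ℝ × ℝ) (L : List (ℝ × ℝ)) :
    sumList (p :: L) = elemPoly p.1 p.2 + sumList L := by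
  unfold sumList
  rw [List.map_cons, List.sum_cons, convexHull_add, convexHull_add, convexHull_add,
    (elemPoly_convex p.1 p.2).convexHull_eq, convex_Q2.convexHull_eq]
  abel

lemma sumList_char {L : List (ℝ × ℝ)} (hL : PosList L) (hS : L.Pairwise rel) :
    sumList L = {p : ℝ × ℝ | 0 ≤ p.1 ∧ F L p.1 ≤ p.2} := by
  induction L with
  | nil =>
      rw [sumList_nil]
      ext p
      simp [Q2, F_nil]
  | cons q L ih =>
      obtain ⟨l, h⟩ := q
      have hl : (0:ℝ) < l := (hL (l, h) (List.mem_cons_self)).1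
      have hh : (0:ℝ) < h := (hL (l, h) (List.mem_cons_self)).2
      have h2 : PosList L := fun r hr => hL r (List.mem_cons_of_mem _ hr)
      have hS2 : L.Pairwise rel := (List.pairwise_cons.mp hS).2
      have hrel : ∀ r ∈ L, r.2 * l ≤ h * r.1 := fun r hr => (List.pairwise_cons.mp hS).1 r hr
      rw [sumList_cons, ih h2 hS2]
      ext p
      constructor
      · rintro ⟨a, ha, c, hc, rfl⟩
        rw [elemPoly_eq_s6 hl hh] at ha
        obtain ⟨ha1, ha2, ha3⟩ := ha
        obtain ⟨hc1, hc2⟩ := hc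
        refine ⟨by simpa using add_nonneg ha1 hc1, ?_⟩
        rw [F_cons]
        simp only [Prod.fst_add, Prod.snd_add]
        rcases le_total l a.1 with hal | hal
        · -- clip term is 0
          have e0 : clip (1 - (a.1 + c.1) / l) = 0 := clip_of_nonpos (by
            have : 1 ≤ (a.1 + c.1) / l := (one_le_div hl).mpr (by linarith)
            linarith)
          rw [e0]
          have := F_antitone h2 (by linarith : c.1 ≤ a.1 + c.1 - l)
          nlinarith
        · rcases le_total l (a.1 + c.1) with hacl | hacl
          · have e0 : clip (1 - (a.1 + c.1) / l) = 0 := clip_of_nonpos (by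
              have : 1 ≤ (a.1 + c.1) / l := (one_le_div hl).mpr hacl
              linarith)
            rw [e0]
            have hlip := F_lip h2 hl hh hrel (by linarith : a.1 + c.1 - l ≤ c.1)
            have : h / l * (c.1 - (a.1 + c.1 - l)) = h - h / l * a.1 := by
              field_simp; ring
            have e2 : h / l * a.1 * l = h * a.1 := by field_simp
            have hb : h - h / l * a.1 ≤ a.2 := by nlinarith [ha3, e2, mul_pos hl hh]
            nlinarith
          · -- a.1 + c.1 < l
            have e1 : clip (1 - (a.1 + c.1) / l) = 1 - (a.1 + c.1) / l := by
              apply clip_of_mem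
              · have : (a.1 + c.1) / l ≤ 1 := (div_le_one hl).mpr hacl
                linarith
              · have : 0 ≤ (a.1 + c.1) / l := by positivity
                linarith
            rw [e1, F_nonpos_eq h2 (by linarith : a.1 + c.1 - l ≤ 0)]
            have hlip := F_lip h2 hl hh hrel (by linarith : (0:ℝ) ≤ c.1)
            rw [F_nonpos_eq h2 le_rfl] at hlip
            have hb : h * (1 - (a.1 + c.1) / l) ≤ a.2 - h / l * c.1 := by
              have : h * (1 - (a.1 + c.1) / l) = h - h / l * a.1 - h / l * c.1 := by
                field_simp; ring
              rw [this]
              have e2 : h / l * a.1 * l = h * a.1 := by field_simp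
              have : h - h / l * a.1 ≤ a.2 := by nlinarith [ha3, e2, mul_pos hl hh]
              linarith
            have : h / l * (c.1 - 0) = h / l * c.1 := by ring
            nlinarith
      · rintro ⟨hp1, hp2⟩
        rw [F_cons] at hp2
        refine ⟨(min p.1 l, h * (1 - min p.1 l / l)), ?_, (p.1 - min p.1 l, p.2 - h * (1 - min p.1 l / l)), ⟨?_, ?_⟩, ?_⟩
        · rw [elemPoly_eq_s6 hl hh]
          refine ⟨le_min hp1 hl.le, ?_, ?_⟩
          · have : min p.1 l / l ≤ 1 := (div_le_one hl).mpr (min_le_right _ _)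
            nlinarith
          · have : h * min p.1 l + l * (h * (1 - min p.1 l / l)) = l * h := by
              field_simp; ring
            linarith [this.ge]
        · simp [le_max_iff, hp1]
        · show F L (p.1 - min p.1 l) ≤ p.2 - h * (1 - min p.1 l / l)
          rcases le_total p.1 l with hc | hc
          · rw [min_eq_left hc]
            have e1 : clip (1 - p.1 / l) = 1 - p.1 / l := by
              apply clip_of_mem
              · have : p.1 / l ≤ 1 := (div_le_one hl).mpr hc
                linarith
              · have : 0 ≤ p.1 / l := by positivity
                linarith
            rw [e1] at hp2
            rw [F_nonpos_eq h2 (by linarith : p.1 - l ≤ 0)] at hp2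
            simp only [sub_self]
            rw [F_nonpos_eq h2 le_rfl]
            linarith
          · rw [min_eq_right hc]
            have := clip_nonneg (1 - p.1 / l)
            simp only [sub_self, div_self hl.ne', sub_self, mul_zero]
            nlinarith
        · ext
          · simp
          · simp

lemma polyHt_char {L : List (ℝ × ℝ)} (hL : PosList L) (hS : L.Pairwise rel) :
    polyHt (sumList L) = (L.map Prod.snd).sum := by
  unfold polyHt
  rw [sumList_char hL hS]
  have : {y : ℝ | ((0:ℝ), y) ∈ {p : ℝ × ℝ | 0 ≤ p.1 ∧ F L p.1 ≤ p.2}} = Set.Ici (F L 0) := by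
    ext y; simp [Set.mem_Ici]
  rw [this, csInf_Ici, F_nonpos_eq hL le_rfl]

lemma F_continuous (L : List (ℝ × ℝ)) : Continuous (F L) := by
  induction L with
  | nil => exact continuous_const
  | cons p L ih =>
      obtain ⟨l, h⟩ := p
      show Continuous fun x => h * clip (1 - x / l) + F L (x - l)
      apply Continuous.add
      · apply Continuous.mul continuous_const
        exact (continuous_const.min ((continuous_const.max
          (continuous_const.sub (continuous_id.div_const l)))))
      · exact ih.comp (continuous_id.sub continuous_const)

lemma F_zero_of_ge {L : List (ℝ × ℝ)} (hL : PosList L) {x : ℝ}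
    (hx : (L.map Prod.fst).sum ≤ x) : F L x = 0 := by
  induction L generalizing x with
  | nil => rfl
  | cons p L ih =>
      obtain ⟨l, h⟩ := p
      have hl : (0:ℝ) < l := (hL (l, h) (List.mem_cons_self)).1
      have h2 : PosList L := fun r hr => hL r (List.mem_cons_of_mem _ hr)
      have hsum : 0 ≤ (L.map Prod.fst).sum := by
        apply List.sum_nonneg
        intro a ha
        obtain ⟨r, hr, rfl⟩ := List.mem_map.mp ha
        exact (h2 r hr).1.le
      simp only [List.map_cons, List.sum_cons] at hx
      rw [F_cons]
      have e0 : clip (1 - x / l) = 0 := clip_of_nonpos (by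
        have : 1 ≤ x / l := (one_le_div hl).mpr (by linarith)
        linarith)
      rw [e0, mul_zero, zero_add]
      exact ih h2 (by linarith)

/-- the double sum -/
noncomputable def DS (L : List (ℝ × ℝ)) : ℝ :=
  (L.flatMap fun p => L.map fun q => min (p.1 * q.2) (q.1 * p.2)).sum

lemma intF {L : List (ℝ × ℝ)} (hL : PosList L) (hS : L.Pairwise rel) :
    ∫ x in (0:ℝ)..(L.map Prod.fst).sum, F L x = DS L / 2 := by
  induction L with
  | nil => simp [F_nil, DS]
  | cons q L ih =>
      obtain ⟨l, h⟩ := q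
      have hl : (0:ℝ) < l := (hL (l, h) (List.mem_cons_self)).1
      have hh : (0:ℝ) < h := (hL (l, h) (List.mem_cons_self)).2
      have h2 : PosList L := fun r hr => hL r (List.mem_cons_of_mem _ hr)
      have hS2 : L.Pairwise rel := (List.pairwise_cons.mp hS).2
      have hrel : ∀ r ∈ L, r.2 * l ≤ h * r.1 := fun r hr => (List.pairwise_cons.mp hS).1 r hr
      have hsum : 0 ≤ (L.map Prod.fst).sum := by
        apply List.sum_nonneg
        intro a ha
        obtain ⟨r, hr, rfl⟩ := List.mem_map.mp ha
        exact (h2 r hr).1.le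
      set S := (L.map Prod.fst).sum with hSdef
      simp only [List.map_cons, List.sum_cons]
      have hi1 : IntervalIntegrable (fun x => h * clip (1 - x / l)) volume 0 (l + S) := by
        apply Continuous.intervalIntegrable
        exact continuous_const.mul (continuous_const.min (continuous_const.max
          (continuous_const.sub (continuous_id.div_const l))))
      have hi2 : IntervalIntegrable (fun x => F L (x - l)) volume 0 (l + S) :=
        ((F_continuous L).comp (continuous_id.sub continuous_const)).intervalIntegrable _ _
      have split : ∫ x in (0:ℝ)..(l + S), F ((l, h) :: L) x
          = (∫ x in (0:ℝ)..(l + S), h * clip (1 - x / l))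
            + ∫ x in (0:ℝ)..(l + S), F L (x - l) := by
        rw [← intervalIntegral.integral_add hi1 hi2]
        rfl
      -- first integral
      have first : ∫ x in (0:ℝ)..(l + S), h * clip (1 - x / l) = l * h / 2 := by
        have m1 : Set.uIcc (0:ℝ) l ⊆ Set.uIcc 0 (l + S) :=
          Set.uIcc_subset_uIcc (Set.mem_uIcc.mpr (Or.inl ⟨le_rfl, by linarith⟩))
            (Set.mem_uIcc.mpr (Or.inl ⟨by linarith, by linarith⟩))
        have m2 : Set.uIcc l (l + S) ⊆ Set.uIcc 0 (l + S) :=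
          Set.uIcc_subset_uIcc (Set.mem_uIcc.mpr (Or.inl ⟨by linarith, by linarith⟩))
            (Set.mem_uIcc.mpr (Or.inl ⟨by linarith, le_rfl⟩))
        rw [← intervalIntegral.integral_add_adjacent_intervals (b := l)
          (hi1.mono_set m1) (hi1.mono_set m2)]
        have e1 : ∫ x in (0:ℝ)..l, h * clip (1 - x / l) = ∫ x in (0:ℝ)..l, h * (1 - x / l) := by
          apply intervalIntegral.integral_congr
          intro x hx
          rw [Set.uIcc_of_le (by linarith : (0:ℝ) ≤ l)] at hx
          have hcl : clip (1 - x / l) = 1 - x / l := clip_of_mem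
            (by have hxl : x / l ≤ 1 := (div_le_one hl).mpr hx.2; linarith)
            (by have hx0 : 0 ≤ x / l := div_nonneg hx.1 hl.le; linarith)
          simp only [hcl]
        have e2 : ∫ x in (l:ℝ)..(l + S), h * clip (1 - x / l) = 0 := by
          have ec : ∫ x in (l:ℝ)..(l + S), h * clip (1 - x / l) = ∫ x in (l:ℝ)..(l + S), (0:ℝ) := by
            apply intervalIntegral.integral_congr
            intro x hx
            rw [Set.uIcc_of_le (by linarith : l ≤ l + S)] at hx
            have hcl : clip (1 - x / l) = 0 := clip_of_nonpos (by
              have h1x : 1 ≤ x / l := (one_le_div hl).mpr hx.1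
              linarith)
            simp [hcl]
          rw [ec, intervalIntegral.integral_zero]
        rw [e1, e2, add_zero, intervalIntegral.integral_const_mul]
        have isub : (∫ x in (0:ℝ)..l, (1 - x / l)) =
            (∫ x in (0:ℝ)..l, (1:ℝ)) - ∫ x in (0:ℝ)..l, x / l :=
          intervalIntegral.integral_sub intervalIntegrable_const
            ((continuous_id'.div_const l).intervalIntegrable _ _)
        rw [isub, intervalIntegral.integral_div, integral_id, intervalIntegral.integral_const]
        simp only [smul_eq_mul, mul_one, sub_zero]
        field_simp
        ring
      -- second integral
      have second : ∫ x in (0:ℝ)..(l + S), F L (x - l) = l * (L.map Prod.snd).sum + DS L / 2 := by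
        rw [intervalIntegral.integral_comp_sub_right (fun x => F L x) l]
        have e0 : (0:ℝ) - l = -l := by ring
        have e1 : l + S - l = S := by ring
        rw [e0, e1]
        have hiL : ∀ a b : ℝ, IntervalIntegrable (F L) volume a b :=
          fun a b => (F_continuous L).intervalIntegrable _ _
        rw [← intervalIntegral.integral_add_adjacent_intervals (b := (0:ℝ)) (hiL _ _) (hiL _ _)]
        have eA : ∫ x in (-l:ℝ)..0, F L x = l * (L.map Prod.snd).sum := by
          have : ∫ x in (-l:ℝ)..0, F L x = ∫ x in (-l:ℝ)..0, (L.map Prod.snd).sum := by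
            apply intervalIntegral.integral_congr
            intro x hx
            rw [Set.uIcc_of_le (by linarith : -l ≤ (0:ℝ))] at hx
            exact F_nonpos_eq h2 hx.2
          rw [this, intervalIntegral.integral_const, smul_eq_mul]
          ring
        rw [eA, ih h2 hS2]
      rw [split, first, second]
      -- DS cons identity
      have hmem : ∀ r ∈ L, min (l * r.2) (r.1 * h) = l * r.2 := by
        intro r hr
        apply min_eq_left
        have := hrel r hr
        have hr1 := (h2 r hr).1
        have hr2 := (h2 r hr).2
        nlinarith
      have DSc : DS ((l, h) :: L) = l * h + 2 * (l * (L.map Prod.snd).sum) + DS L := by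
        have e2 : (List.map (fun q => min ((l, h).1 * q.2) (q.1 * (l, h).2)) L).sum
            = l * (L.map Prod.snd).sum := by
          rw [← List.sum_map_mul_left]
          apply congrArg
          apply List.map_congr_left
          intro r hr
          simpa using hmem r hr
        have key : ∀ (T : List (ℝ × ℝ)), (∀ r ∈ T, r ∈ L) →
            (T.flatMap fun p => List.map (fun q => min (p.1 * q.2) (q.1 * p.2)) ((l, h) :: L)).sum
              = l * (T.map Prod.snd).sum
                + (T.flatMap fun p => List.map (fun q => min (p.1 * q.2) (q.1 * p.2)) L).sum := by
          intro T hT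
          induction T with
          | nil => simp
          | cons r T ihT =>
              rw [List.flatMap_cons, List.sum_append,
                ihT (fun s hs => hT s (List.mem_cons_of_mem _ hs)),
                List.flatMap_cons, List.sum_append, List.map_cons, List.sum_cons,
                List.map_cons, List.sum_cons]
              have hr : min (r.1 * (l, h).2) ((l, h).1 * r.2) = l * r.2 := by
                have := hmem r (hT r (List.mem_cons_self))
                rw [min_comm] at this
                simpa using this
              rw [hr]
              ring
        unfold DS
        rw [List.flatMap_cons, List.sum_append, key L (fun r hr => hr), List.map_cons,
          List.sum_cons, e2, min_self]
        have e1' : ((l, h) : ℝ × ℝ).1 * ((l, h) : ℝ × ℝ).2 = l * h := rfl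
        rw [e1']
        ring
      rw [DSc]
      ring

lemma vol_char {L : List (ℝ × ℝ)} (hL : PosList L) (hS : L.Pairwise rel) :
    polyVol (sumList L) = DS L / 2 := by
  set B := (L.map Prod.fst).sum with hBdef
  have hB : 0 ≤ B := by
    apply List.sum_nonneg
    intro a ha
    obtain ⟨r, hr, rfl⟩ := List.mem_map.mp ha
    exact (hL r hr).1.le
  have hint : IntegrableOn (F L) (Set.Ici 0) volume := by
    rw [← Set.Icc_union_Ici_eq_Ici hB]
    apply MeasureTheory.IntegrableOn.union
    · exact (F_continuous L).integrableOn_Icc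
    · have heq : Set.EqOn (F L) (fun _ => (0:ℝ)) (Set.Ici B) :=
        fun x hx => F_zero_of_ge hL hx
      exact (integrableOn_congr_fun heq measurableSet_Ici).mpr integrableOn_zero
  have hA : Q2 \ sumList L = {p : ℝ × ℝ | 0 ≤ p.1 ∧ 0 ≤ p.2 ∧ p.2 < F L p.1} := by
    rw [sumList_char hL hS]
    ext p
    simp only [Set.mem_diff, Set.mem_setOf_eq, Q2]
    constructor
    · rintro ⟨⟨h1, h2⟩, h3⟩
      push_neg at h3
      exact ⟨h1, h2, lt_of_not_ge (fun hc => absurd (h3 h1) (not_lt.mpr hc))⟩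
    · rintro ⟨h1, h2, h3⟩
      exact ⟨⟨h1, h2⟩, fun hc => absurd hc.2 (not_le.mpr h3)⟩
  have hRB : regionBetween (fun _ => (0:ℝ)) (F L) (Set.Ici 0)
      ⊆ Q2 \ sumList L := by
    rw [hA]
    rintro p ⟨hp1, hp2⟩
    exact ⟨hp1, le_of_lt hp2.1, hp2.2⟩
  have hAB : Q2 \ sumList L ⊆ regionBetween (fun _ => (0:ℝ)) (F L) (Set.Ici 0)
      ∪ ((Set.univ : Set ℝ) ×ˢ ({0} : Set ℝ)) := by
    rw [hA]
    rintro p ⟨h1, h2, h3⟩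
    rcases eq_or_lt_of_le h2 with he | he
    · exact Or.inr ⟨Set.mem_univ _, by simp [← he]⟩
    · exact Or.inl ⟨h1, he, h3⟩
  have hnull : volume ((Set.univ : Set ℝ) ×ˢ ({0} : Set ℝ)) = 0 := by
    rw [MeasureTheory.Measure.volume_eq_prod, MeasureTheory.Measure.prod_prod]
    simp
  have hvol : volume (Q2 \ sumList L)
      = volume (regionBetween (fun _ => (0:ℝ)) (F L) (Set.Ici 0)) := by
    apply le_antisymm
    · calc volume (Q2 \ sumList L)
          ≤ volume (regionBetween (fun _ => (0:ℝ)) (F L) (Set.Ici 0)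
              ∪ ((Set.univ : Set ℝ) ×ˢ ({0} : Set ℝ))) := measure_mono hAB
        _ ≤ volume (regionBetween (fun _ => (0:ℝ)) (F L) (Set.Ici 0))
              + volume ((Set.univ : Set ℝ) ×ˢ ({0} : Set ℝ)) := measure_union_le _ _
        _ = volume (regionBetween (fun _ => (0:ℝ)) (F L) (Set.Ici 0)) := by
              rw [hnull, add_zero]
    · exact measure_mono hRB
  have hreg : volume (regionBetween (fun _ => (0:ℝ)) (F L) (Set.Ici 0))
      = ENNReal.ofReal (∫ y in Set.Ici (0:ℝ), F L y) := by
    rw [MeasureTheory.Measure.volume_eq_prod]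
    rw [volume_regionBetween_eq_integral (integrableOn_zero) hint measurableSet_Ici
      (fun x _ => F_nonneg hL x)]
    congr 1
    apply MeasureTheory.setIntegral_congr_fun measurableSet_Ici
    intro x _
    simp
  have hI : ∫ y in Set.Ici (0:ℝ), F L y = DS L / 2 := by
    rw [← MeasureTheory.setIntegral_congr_set (MeasureTheory.Ioi_ae_eq_Ici (a := (0:ℝ)))]
    rw [← Set.Ioc_union_Ioi_eq_Ioi hB]
    rw [MeasureTheory.setIntegral_union (Set.Ioc_disjoint_Ioi le_rfl) measurableSet_Ioi
      (hint.mono_set (fun x hx => le_of_lt hx.1))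
      (hint.mono_set (fun x hx => le_trans hB (le_of_lt hx)))]
    have hzero : ∫ y in Set.Ioi B, F L y = 0 := by
      rw [MeasureTheory.setIntegral_congr_fun measurableSet_Ioi
        (fun x hx => F_zero_of_ge hL (le_of_lt hx))]
      simp
    rw [hzero, add_zero, ← intervalIntegral.integral_of_le hB, intF hL hS]
  have hDS : 0 ≤ DS L / 2 := by
    rw [← intF hL hS]
    exact intervalIntegral.integral_nonneg hB (fun x _ => F_nonneg hL x)
  unfold polyVol
  rw [hvol, hreg, hI, ENNReal.toReal_ofReal hDS]

lemma exists_sorted {L : List (ℝ × ℝ)} (hL : PosList L) :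
    ∃ L' : List (ℝ × ℝ), L.Perm L' ∧ PosList L' ∧ L'.Pairwise rel := by
  classical
  let S := {p : ℝ × ℝ // 0 < p.1 ∧ 0 < p.2}
  let Ls : List S := L.attach.map fun x => ⟨x.1, hL x.1 x.2⟩
  let le : S → S → Bool := fun a b => decide (b.1.2 * a.1.1 ≤ a.1.2 * b.1.1)
  have htrans : ∀ a b c : S, le a b = true → le b c = true → le a c = true := by
    intro a b c hab hbc
    simp only [le, decide_eq_true_eq] at *
    obtain ⟨ha1, ha2⟩ := a.2
    obtain ⟨hb1, hb2⟩ := b.2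
    obtain ⟨hc1, hc2⟩ := c.2
    nlinarith [mul_le_mul_of_nonneg_right hab hc1.le,
      mul_le_mul_of_nonneg_right hbc ha1.le, hb1, hb2]
  have htot : ∀ a b : S, (le a b || le b a) = true := by
    intro a b
    simp only [le, Bool.or_eq_true, decide_eq_true_eq]
    exact le_total _ _
  refine ⟨(Ls.mergeSort le).map Subtype.val, ?_, ?_, ?_⟩
  · have h1 : (Ls.mergeSort le).Perm Ls := List.mergeSort_perm Ls le
    have h2 : ((Ls.mergeSort le).map Subtype.val).Perm (Ls.map Subtype.val) := h1.map _
    have h3 : Ls.map Subtype.val = L := by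
      show List.map Subtype.val (List.map (fun x => (⟨x.1, hL x.1 x.2⟩ : S)) L.attach) = L
      rw [List.map_map]
      exact (List.attach_map_val (l := L) (f := fun x => x)).trans (by simp)
    rw [h3] at h2
    exact h2.symm
  · intro p hp
    obtain ⟨a, _, rfl⟩ := List.mem_map.mp hp
    exact a.2
  · have hp := List.pairwise_mergeSort htrans htot Ls
    rw [List.pairwise_map]
    apply hp.imp
    intro a b hab
    simpa [le, rel, decide_eq_true_eq] using hab

lemma sum_flatMap' {α : Type*} (f : α → List ℝ) (l : List α) :
    (l.flatMap f).sum = (l.map fun a => (f a).sum).sum := by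
  induction l with
  | nil => simp
  | cons a l ih => simp [List.flatMap_cons, ih]

lemma DS_perm {L L' : List (ℝ × ℝ)} (h : L.Perm L') : DS L = DS L' := by
  unfold DS
  rw [sum_flatMap', sum_flatMap']
  calc (L.map fun p => (L.map fun q => min (p.1 * q.2) (q.1 * p.2)).sum).sum
      = (L.map fun p => (L'.map fun q => min (p.1 * q.2) (q.1 * p.2)).sum).sum := by
        apply congrArg
        exact List.map_congr_left (fun p _ => (h.map _).sum_eq)
    _ = (L'.map fun p => (L'.map fun q => min (p.1 * q.2) (q.1 * p.2)).sum).sum :=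
        (h.map _).sum_eq

/-- For `N₁ = Σᵢ {ℓᵢ/hᵢ}`, the height of `N₁ * N₁` equals `Σ_{i,j} min(ℓᵢh_j, ℓ_jhᵢ)`,
which equals twice the area enclosed by `N₁`. -/
theorem polyHt_prod_self (L : List (ℝ × ℝ)) (hL : PosList L) :
    polyHt (sumList (prodList L L)) =
      (L.flatMap fun p => L.map fun q => min (p.1 * q.2) (q.1 * p.2)).sum ∧
    polyHt (sumList (prodList L L)) = 2 * polyVol (sumList L) := by
  have hM : PosList (prodList L L) := by
    intro r hr
    obtain ⟨p, hp, hr2⟩ := List.mem_flatMap.mp hr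
    obtain ⟨q, hq, rfl⟩ := List.mem_map.mp hr2
    obtain ⟨hp1, hp2⟩ := hL p hp
    obtain ⟨hq1, hq2⟩ := hL q hq
    exact ⟨mul_pos hp1 hq1, lt_min (mul_pos hp1 hq2) (mul_pos hq1 hp2)⟩
  obtain ⟨M', hMp, hMpos, hMsort⟩ := exists_sorted hM
  obtain ⟨L', hLp, hLpos, hLsort⟩ := exists_sorted hL
  have h1 : polyHt (sumList (prodList L L)) = ((prodList L L).map Prod.snd).sum := by
    rw [sumList_perm hMp, polyHt_char hMpos hMsort, ← (hMp.map Prod.snd).sum_eq]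
  have hsnd : ((prodList L L).map Prod.snd).sum = DS L := by
    unfold DS prodList
    rw [List.map_flatMap]
    congr 1
    have hfun : (fun (a : ℝ × ℝ) =>
          List.map Prod.snd (List.map (fun q => (a.1 * q.1, min (a.1 * q.2) (q.1 * a.2))) L))
        = fun p => List.map (fun q => min (p.1 * q.2) (q.1 * p.2)) L := by
      funext a
      rw [List.map_map]
      apply List.map_congr_left
      intro q _
      rfl
    rw [hfun]
  constructor
  · rw [h1, hsnd]
    rfl
  · rw [h1, hsnd, sumList_perm hLp, vol_char hLpos hLsort, ← DS_perm hLp]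
    ring
end
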